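/- arXiv:1007.1957 — 5 statements merged into one kernel-verified Lean document; each statement's English description precedes it below -/
import Mathlib

section
/- Let s < 1. Then almost surely sup_{n∈ℤ∖{0}} ⟨n⟩^{s} |n|^{−1} |g_n| < ∞; that is, the Fourier–Wiener series u belongs almost surely to 𝓕L^{s,∞}(𝕋) (equivalently, to M^{p,∞}_s(𝕋) for every 1 ≤ p ≤ ∞). -/
open MeasureTheory ProbabilityTheory Filter

noncomputable section

/-- The family `(gₙ)_{n ∈ ℤ ∖ {0}}` is a family of independent standard complex-valued
Gaussian random variables: writing `gₙ = aₙ + i bₙ`, all the real and imaginary parts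
`aₙ, bₙ` (for `n ≠ 0`) are mutually independent standard real `N(0,1)` Gaussians. -/
def IsStdComplexGaussianFamily {Ω : Type*} [MeasurableSpace Ω] (P : Measure Ω)
    (g : ℤ → Ω → ℂ) : Prop :=
  iIndepFun (fun i : {n : ℤ // n ≠ 0} × Bool => fun ω =>
      if i.2 then (g (i.1 : ℤ) ω).re else (g (i.1 : ℤ) ω).im) P ∧
  ∀ i : {n : ℤ // n ≠ 0} × Bool,
    P.map (fun ω => if i.2 then (g (i.1 : ℤ) ω).re else (g (i.1 : ℤ) ω).im)
      = gaussianReal 0 1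

section Aux
open Real
open scoped NNReal ENNReal

lemma aux_ptwise (x : ℝ) :
    gaussianPDFReal 0 1 x * Real.exp (|x|/2)
      ≤ Real.exp (1/4) * Real.exp (-(1/4) * x ^ 2) := by
  rw [gaussianPDFReal]
  simp only [NNReal.coe_one, mul_one, sub_zero]
  have h1 : (√(2 * π))⁻¹ ≤ 1 := by
    rw [inv_le_one_iff₀]
    right
    rw [Real.one_le_sqrt]
    nlinarith [Real.pi_gt_three]
  have h2 : Real.exp (-x ^ 2 / 2) * Real.exp (|x|/2)
      ≤ Real.exp (1/4) * Real.exp (-(1/4) * x ^ 2) := by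
    rw [← Real.exp_add, ← Real.exp_add]
    apply Real.exp_le_exp.2
    nlinarith [sq_nonneg (|x| - 1), sq_abs x]
  calc (√(2 * π))⁻¹ * Real.exp (-x ^ 2 / 2) * Real.exp (|x|/2)
      ≤ 1 * (Real.exp (-x ^ 2 / 2) * Real.exp (|x|/2)) := by
        rw [mul_assoc]
        exact mul_le_mul_of_nonneg_right h1 (by positivity)
    _ ≤ Real.exp (1/4) * Real.exp (-(1/4) * x ^ 2) := by rw [one_mul]; exact h2

lemma aux_I_lt_top :
    ∫⁻ x, ENNReal.ofReal (Real.exp (|x|/2)) ∂(gaussianReal 0 1) < ⊤ := by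
  rw [gaussianReal_of_var_ne_zero 0 one_ne_zero,
    lintegral_withDensity_eq_lintegral_mul _ (measurable_gaussianPDF 0 1)
      (by fun_prop)]
  have hb : ∀ x : ℝ, (gaussianPDF 0 1 * fun x => ENNReal.ofReal (Real.exp (|x|/2))) x
      ≤ ENNReal.ofReal (Real.exp (1/4) * Real.exp (-(1/4) * x ^ 2)) := by
    intro x
    simp only [Pi.mul_apply, gaussianPDF, ← ENNReal.ofReal_mul (gaussianPDFReal_nonneg _ _ _)]
    exact ENNReal.ofReal_le_ofReal (aux_ptwise x)
  calc ∫⁻ x, (gaussianPDF 0 1 * fun x => ENNReal.ofReal (Real.exp (|x|/2))) x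
      ≤ ∫⁻ x, ENNReal.ofReal (Real.exp (1/4) * Real.exp (-(1/4) * x ^ 2)) := lintegral_mono hb
    _ = ENNReal.ofReal (∫ x, Real.exp (1/4) * Real.exp (-(1/4) * x ^ 2)) := by
        rw [← ofReal_integral_eq_lintegral_ofReal]
        · exact ((integrable_exp_neg_mul_sq (by norm_num : (0:ℝ) < 1/4)).const_mul _).congr
            (by filter_upwards with x; ring_nf)
        · filter_upwards with x; positivity
    _ < ⊤ := ENNReal.ofReal_lt_top

lemma aux_tail (t : ℝ) :
    gaussianReal 0 1 {x : ℝ | t ≤ |x|}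
      ≤ ENNReal.ofReal (Real.exp (-(t/2)))
        * ∫⁻ x, ENNReal.ofReal (Real.exp (|x|/2)) ∂(gaussianReal 0 1) := by
  set μ := gaussianReal 0 1
  set ε : ℝ≥0∞ := ENNReal.ofReal (Real.exp (t/2)) with hε
  have hε0 : ε ≠ 0 := by simp [hε, Real.exp_pos]
  have hεtop : ε ≠ ⊤ := ENNReal.ofReal_ne_top
  have hsub : {x : ℝ | t ≤ |x|} ⊆ {x : ℝ | ε ≤ ENNReal.ofReal (Real.exp (|x|/2))} := by
    intro x hx
    exact ENNReal.ofReal_le_ofReal (Real.exp_le_exp.2 (by linarith [Set.mem_setOf_eq ▸ hx]))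
  have hmarkov := mul_meas_ge_le_lintegral₀
    (μ := μ) (f := fun x => ENNReal.ofReal (Real.exp (|x|/2)))
    (by fun_prop) ε
  have hinv : ε⁻¹ = ENNReal.ofReal (Real.exp (-(t/2))) := by
    rw [hε, ← ENNReal.ofReal_inv_of_pos (Real.exp_pos _), ← Real.exp_neg]
  calc μ {x : ℝ | t ≤ |x|}
      ≤ μ {x : ℝ | ε ≤ ENNReal.ofReal (Real.exp (|x|/2))} := measure_mono hsub
    _ = ε⁻¹ * (ε * μ {x : ℝ | ε ≤ ENNReal.ofReal (Real.exp (|x|/2))}) := by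
        rw [← mul_assoc, ENNReal.inv_mul_cancel hε0 hεtop, one_mul]
    _ ≤ ε⁻¹ * ∫⁻ x, ENNReal.ofReal (Real.exp (|x|/2)) ∂μ := mul_le_mul_right hmarkov _
    _ = _ := by rw [hinv]

lemma aux_key {β : ℝ} (hβ : 0 < β) {m : ℝ} (hm : 1 ≤ m) (k : ℕ) (hk : 2 ≤ β * k) :
    Real.exp (-(m ^ β / 2)) ≤ (k.factorial * 2 ^ k : ℝ) / m ^ 2 := by
  have hm0 : (0:ℝ) < m := lt_of_lt_of_le one_pos hm
  set y : ℝ := m ^ β / 2 with hy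
  have hy0 : 0 < y := by positivity
  have h1 : y ^ k / k.factorial ≤ Real.exp y := by
    refine le_trans ?_ (Real.sum_le_exp_of_nonneg hy0.le (k + 1))
    exact Finset.single_le_sum (f := fun i => y ^ i / i.factorial)
      (fun i _ => by positivity) (Finset.self_mem_range_succ k)
  have h2 : m ^ (2:ℝ) / 2 ^ k ≤ y ^ k := by
    rw [hy, div_pow, ← Real.rpow_natCast (m ^ β) k, ← Real.rpow_mul hm0.le]
    have h2' : m ^ (2:ℝ) ≤ m ^ (β * k) := Real.rpow_le_rpow_of_exponent_le hm (by linarith)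
    exact div_le_div_of_nonneg_right h2' (by positivity)
  have h3 : Real.exp (-y) ≤ k.factorial / y ^ k := by
    rw [Real.exp_neg]
    have := inv_anti₀ (by positivity : (0:ℝ) < y ^ k / k.factorial) h1
    rwa [inv_div] at this
  refine h3.trans ?_
  rw [div_le_div_iff₀ (by positivity) (by positivity)]
  calc (k.factorial : ℝ) * m ^ 2 = k.factorial * m ^ (2:ℝ) := by rw [Real.rpow_two]
    _ = (k.factorial * 2 ^ k) * (m ^ (2:ℝ) / 2 ^ k) := by field_simp
    _ ≤ (k.factorial * 2 ^ k) * y ^ k := mul_le_mul_of_nonneg_left h2 (by positivity)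

lemma aux_summable {β : ℝ} (hβ : 0 < β) :
    Summable (fun n : {n : ℤ // n ≠ 0} => Real.exp (-(|((n:ℤ):ℝ)| ^ β / 2))) := by
  obtain ⟨k, hk⟩ : ∃ k : ℕ, 2 ≤ β * k := by
    refine ⟨⌈2/β⌉₊, ?_⟩
    have := Nat.le_ceil (2/β)
    rw [div_le_iff₀ hβ] at this
    linarith
  have hsum : Summable (fun n : ℤ => (k.factorial * 2 ^ k : ℝ) * (1 / (n:ℝ)^2)) :=
    (summable_one_div_int_pow.2 one_lt_two).mul_left _
  refine Summable.of_nonneg_of_le (fun n => (Real.exp_pos _).le) (fun n => ?_)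
    (hsum.subtype _)
  have hm : (1:ℝ) ≤ |((n:ℤ):ℝ)| := by
    rw [← Int.cast_abs]
    exact_mod_cast Int.one_le_abs (by simpa using n.2)
  calc Real.exp (-(|((n:ℤ):ℝ)| ^ β / 2))
      ≤ (k.factorial * 2 ^ k : ℝ) / |((n:ℤ):ℝ)| ^ 2 := aux_key hβ hm k hk
    _ = (k.factorial * 2 ^ k : ℝ) * (1 / (((n:ℤ)):ℝ)^2) := by rw [sq_abs]; ring

lemma aux_summable_prod {β : ℝ} (hβ : 0 < β) :
    Summable (fun i : {n : ℤ // n ≠ 0} × Bool =>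
      Real.exp (-(|((i.1:ℤ):ℝ)| ^ β / 2))) := by
  refine (summable_prod_of_nonneg (fun _ => (Real.exp_pos _).le)).2 ⟨fun x => ?_, ?_⟩
  · exact Summable.of_finite
  · refine Summable.congr (((aux_summable hβ).add (aux_summable hβ))) fun n => ?_
    rw [tsum_bool]

end Aux

/-- If `s < 1`, then almost surely `sup_{n ≠ 0} ⟨n⟩^s |n|⁻¹ |gₙ| < ∞`, i.e. the
Fourier–Wiener series belongs a.s. to `𝓕L^{s,∞}(𝕋) = M^{p,∞}_s(𝕋)`. -/
theorem brownian_in_FourierLebesgue_qInfty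
    {Ω : Type*} [MeasurableSpace Ω] (P : Measure Ω) [IsProbabilityMeasure P]
    (g : ℤ → Ω → ℂ) (hg : IsStdComplexGaussianFamily P g)
    (s : ℝ) (hs : s < 1) :
    ∀ᵐ ω ∂P,
      BddAbove (Set.range fun n : {n : ℤ // n ≠ 0} =>
        (1 + ((n : ℤ) : ℝ) ^ 2) ^ (s / 2) * |((n : ℤ) : ℝ)|⁻¹
          * ‖g (n : ℤ) ω‖) := by
  obtain ⟨hindep, hmap⟩ := hg
  set s' : ℝ := max s 0 with hs'def
  have hs'0 : 0 ≤ s' := le_max_right _ _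
  have hs'1 : s' < 1 := max_lt hs one_pos
  set β : ℝ := (1 - s') / 2 with hβdef
  have hβ : 0 < β := by rw [hβdef]; linarith
  set X : {n : ℤ // n ≠ 0} × Bool → Ω → ℝ :=
    fun i ω => if i.2 then (g (i.1 : ℤ) ω).re else (g (i.1 : ℤ) ω).im with hXdef
  have hXm : ∀ i, AEMeasurable (X i) P := fun i =>
    aemeasurable_of_map_neZero (by
      have : P.map (X i) = gaussianReal 0 1 := hmap i
      rw [this]; infer_instance)
  set T : {n : ℤ // n ≠ 0} → ℝ := fun n => |((n:ℤ):ℝ)| ^ β with hTdef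
  set B : {n : ℤ // n ≠ 0} × Bool → Set Ω := fun i => {ω | T i.1 ≤ |X i ω|} with hBdef
  set I := ∫⁻ x, ENNReal.ofReal (Real.exp (|x|/2)) ∂(gaussianReal 0 1) with hIdef
  have hPB : ∀ i, P (B i) ≤ ENNReal.ofReal (Real.exp (-(T i.1 / 2))) * I := by
    intro i
    have hS : MeasurableSet {x : ℝ | T i.1 ≤ |x|} :=
      measurableSet_le measurable_const continuous_abs.measurable
    have hmapi : P.map (X i) = gaussianReal 0 1 := hmap i
    have heq : P (B i) = (P.map (X i)) {x : ℝ | T i.1 ≤ |x|} := by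
      rw [Measure.map_apply_of_aemeasurable (hXm i) hS]
      rfl
    rw [heq, hmapi]
    exact aux_tail _
  have hsum : ∑' i, P (B i) ≠ ⊤ := by
    have h1 : ∑' i, P (B i)
        ≤ ∑' i : {n : ℤ // n ≠ 0} × Bool,
            ENNReal.ofReal (Real.exp (-(T i.1 / 2))) * I := ENNReal.tsum_le_tsum hPB
    have h2 : ∑' i : {n : ℤ // n ≠ 0} × Bool,
        ENNReal.ofReal (Real.exp (-(T i.1 / 2))) * I
        = (∑' i : {n : ℤ // n ≠ 0} × Bool, ENNReal.ofReal (Real.exp (-(T i.1 / 2)))) * I :=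
      ENNReal.tsum_mul_right
    have h3 : ∑' i : {n : ℤ // n ≠ 0} × Bool, ENNReal.ofReal (Real.exp (-(T i.1 / 2)))
        = ENNReal.ofReal (∑' i : {n : ℤ // n ≠ 0} × Bool, Real.exp (-(T i.1 / 2))) := by
      rw [ENNReal.ofReal_tsum_of_nonneg (fun i => (Real.exp_pos _).le)]
      exact (aux_summable_prod hβ).congr fun i => by rw [hTdef]
    refine ne_top_of_le_ne_top ?_ h1
    rw [h2, h3]
    exact ENNReal.mul_ne_top ENNReal.ofReal_ne_top aux_I_lt_top.ne
  filter_upwards [MeasureTheory.ae_finite_setOf_mem hsum] with ω hω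
  set f : {n : ℤ // n ≠ 0} → ℝ := fun n =>
    (1 + ((n : ℤ) : ℝ) ^ 2) ^ (s / 2) * |((n : ℤ) : ℝ)|⁻¹ * ‖g (n : ℤ) ω‖
    with hfdef
  have hbadT : ({n : {n : ℤ // n ≠ 0} | ω ∈ B (n, true) ∨ ω ∈ B (n, false)}).Finite := by
    refine (hω.image Prod.fst).subset ?_
    rintro n (h | h)
    · exact ⟨(n, true), h, rfl⟩
    · exact ⟨(n, false), h, rfl⟩
  obtain ⟨M, hM⟩ := (hbadT.image f).bddAbove
  refine ⟨max M 4, ?_⟩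
  rintro y ⟨n, rfl⟩
  by_cases hn : ω ∈ B (n, true) ∨ ω ∈ B (n, false)
  · exact le_trans (hM (Set.mem_image_of_mem f hn)) (le_max_left _ _)
  · push_neg at hn
    obtain ⟨h1, h2⟩ := hn
    have hre : |(g (n : ℤ) ω).re| < T n := by
      simpa [hBdef, hXdef] using h1
    have him : |(g (n : ℤ) ω).im| < T n := by
      simpa [hBdef, hXdef] using h2
    set m : ℝ := |((n:ℤ):ℝ)| with hmdef
    have hm : (1:ℝ) ≤ m := by
      rw [hmdef, ← Int.cast_abs]
      exact_mod_cast Int.one_le_abs (by simpa using n.2)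
    have hm0 : (0:ℝ) < m := lt_of_lt_of_le one_pos hm
    have hT0 : 0 ≤ T n := Real.rpow_nonneg (abs_nonneg _) _
    have habs : ‖g (n : ℤ) ω‖ ≤ 2 * T n :=
      (Complex.norm_le_abs_re_add_abs_im _).trans (by linarith)
    -- bound on the coefficient
    have hx2 : ((n:ℤ):ℝ) ^ 2 = m ^ 2 := (sq_abs _).symm
    have hbase : (1:ℝ) ≤ 1 + ((n:ℤ):ℝ) ^ 2 := by nlinarith [sq_nonneg (((n:ℤ):ℝ))]
    have hA : (1 + ((n:ℤ):ℝ) ^ 2) ^ (s / 2) ≤ 2 * m ^ s' := by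
      calc (1 + ((n:ℤ):ℝ) ^ 2) ^ (s / 2)
          ≤ (1 + ((n:ℤ):ℝ) ^ 2) ^ (s' / 2) :=
            Real.rpow_le_rpow_of_exponent_le hbase (by
              have : s ≤ s' := le_max_left _ _
              linarith)
        _ ≤ (2 * m ^ 2) ^ (s' / 2) := by
            apply Real.rpow_le_rpow (by linarith) _ (by linarith)
            rw [hx2] at hbase ⊢
            nlinarith
        _ = 2 ^ (s' / 2) * (m ^ 2) ^ (s' / 2) :=
            Real.mul_rpow (by norm_num) (by positivity)
        _ = 2 ^ (s' / 2) * m ^ s' := by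
            rw [← Real.rpow_natCast m 2, ← Real.rpow_mul hm0.le]
            congr 1
            push_cast
            ring
        _ ≤ 2 * m ^ s' := by
            have h2s : (2:ℝ) ^ (s' / 2) ≤ 2 ^ (1:ℝ) :=
              Real.rpow_le_rpow_of_exponent_le one_le_two (by linarith)
            rw [Real.rpow_one] at h2s
            exact mul_le_mul_of_nonneg_right h2s (Real.rpow_nonneg hm0.le _)
    have hcoef : (1 + ((n:ℤ):ℝ) ^ 2) ^ (s / 2) * m⁻¹ ≤ 2 * m ^ (s' - 1) := by
      calc (1 + ((n:ℤ):ℝ) ^ 2) ^ (s / 2) * m⁻¹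
          ≤ (2 * m ^ s') * m⁻¹ := by
            apply mul_le_mul_of_nonneg_right hA (by positivity)
        _ = 2 * m ^ (s' - 1) := by
            rw [← Real.rpow_neg_one m, mul_assoc, ← Real.rpow_add hm0, sub_eq_add_neg]
    have hfin : f n ≤ 4 := by
      have hcnonneg : (0:ℝ) ≤ 2 * m ^ (s' - 1) := by positivity
      calc f n ≤ (2 * m ^ (s' - 1)) * (2 * T n) := by
            rw [hfdef]
            exact mul_le_mul hcoef habs (norm_nonneg _) hcnonneg
        _ = 4 * (m ^ (s' - 1) * m ^ β) := by rw [hTdef, hmdef]; ring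
        _ = 4 * m ^ (s' - 1 + β) := by rw [← Real.rpow_add hm0]
        _ ≤ 4 * 1 := by
            have : s' - 1 + β ≤ 0 := by rw [hβdef]; linarith
            exact mul_le_mul_of_nonneg_left
              (Real.rpow_le_one_of_one_le_of_nonpos hm this) (by norm_num)
        _ = 4 := by norm_num
    exact le_trans hfin (le_max_right _ _)
end
end

section
/- Let 1 ≤ p < ∞, 1 ≤ q ≤ ∞ and s ∈ ℝ with (s−1)p < −1. Then almost surely ‖u‖_{b̂^s_{p,q}(𝕋)} = ( Σ_{j≥0} ( Σ_{|n|∼2^j} ⟨n⟩^{sp} |n|^{−p} |g_n|^p )^{q/p} )^{1/q} < ∞ (with the ℓ^q sum over j replaced by a supremum when q = ∞); that is, the Fourier–Wiener series u belongs almost surely to the Fourier–Besov space b̂^s_{p,q}(𝕋). -/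
open MeasureTheory ProbabilityTheory Filter

noncomputable section

/-- The dyadic block `{n ∈ ℤ : 2^{j-1} < |n| ≤ 2^j}` (i.e. `|n| ∼ 2^j`). -/
def dyadicBlock (j : ℕ) : Finset ℤ :=
  (Finset.Icc (-(2 ^ j : ℤ)) (2 ^ j)).filter fun n => (2 : ℤ) ^ j < 2 * |n| ∧ |n| ≤ 2 ^ j

/-- The `j`-th block piece of the Fourier–Besov norm of the Fourier–Wiener series:
`( Σ_{|n| ∼ 2^j} ⟨n⟩^{sp} |n|^{-p} aₙ^p )^{1/p}`, where `aₙ = |gₙ(ω)|`. -/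
def fbBlock (a : ℤ → ℝ) (p s : ℝ) (j : ℕ) : ℝ :=
  (∑ n ∈ dyadicBlock j,
      (1 + (n : ℝ) ^ 2) ^ (s * p / 2) * |(n : ℝ)| ^ (-p) * a n ^ p) ^ (1 / p)

/-- The Fourier–Besov `b̂^s_{p,q}(𝕋)` norm of the Fourier–Wiener series, as an
`ℝ≥0∞`-valued quantity: `‖ fbBlock a p s j ‖_{ℓ^q_j}`, with the usual supremum
modification when `q = ∞`. -/
def fbNorm (a : ℤ → ℝ) (p s : ℝ) (q : ENNReal) : ENNReal :=
  if q = ⊤ then ⨆ j : ℕ, ENNReal.ofReal (fbBlock a p s j)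
  else (∑' j : ℕ, ENNReal.ofReal (fbBlock a p s j) ^ q.toReal) ^ (1 / q.toReal)



lemma aux_gauss_moment {p : ℝ} (hp : 0 ≤ p) :
    ∫⁻ x, ENNReal.ofReal (|x| ^ p) ∂(gaussianReal 0 1) < ⊤ := by
  have hmg : Measurable fun x : ℝ => ENNReal.ofReal (x ^ p * Real.exp (-(1/2) * x ^ 2)) :=
    ((measurable_id.pow_const p).mul
      (((measurable_id.pow_const 2).const_mul (-(1/2:ℝ))).exp)).ennreal_ofReal
  have hint : Integrable (fun x : ℝ => x ^ p * Real.exp (-(1/2) * x ^ 2)) :=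
    integrable_rpow_mul_exp_neg_mul_sq (b := 1/2) (by norm_num) (by linarith)
  have hg_fin : ∫⁻ x : ℝ, ENNReal.ofReal (x ^ p * Real.exp (-(1/2) * x ^ 2)) < ⊤ :=
    hint.lintegral_lt_top
  rw [gaussianReal_of_var_ne_zero 0 one_ne_zero,
    lintegral_withDensity_eq_lintegral_mul _ (measurable_gaussianPDF 0 1)
      (show Measurable fun x : ℝ => ENNReal.ofReal (|x| ^ p) from
        (measurable_id.abs.pow_const p).ennreal_ofReal)]
  have key : ∀ x : ℝ, (gaussianPDF 0 1 * fun x => ENNReal.ofReal (|x| ^ p)) x ≤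
      ENNReal.ofReal (x ^ p * Real.exp (-(1/2) * x ^ 2)) +
      ENNReal.ofReal ((-x) ^ p * Real.exp (-(1/2) * (-x) ^ 2)) := by
    intro x
    have h1 : gaussianPDFReal 0 1 x ≤ Real.exp (-(1/2) * x ^ 2) := by
      rw [gaussianPDFReal_def]
      have h2 : (1:ℝ) ≤ Real.sqrt (2 * Real.pi * (1:NNReal)) := by
        rw [show ((1:NNReal):ℝ) = 1 by norm_num, mul_one,
          show (1:ℝ) = Real.sqrt 1 by simp]
        exact Real.sqrt_le_sqrt (by nlinarith [Real.pi_gt_three])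
      have h3 : (Real.sqrt (2 * Real.pi * (1:NNReal)))⁻¹ ≤ 1 := by
        rw [inv_le_one_iff₀]; right; exact h2
      have h4 : -(x - 0) ^ 2 / (2 * ((1:NNReal):ℝ)) = -(1/2) * x ^ 2 := by
        push_cast; ring
      show (Real.sqrt (2 * Real.pi * ((1:NNReal):ℝ)))⁻¹ * Real.exp (-(x - 0) ^ 2 / (2 * ((1:NNReal):ℝ))) ≤ _
      rw [h4]
      calc (Real.sqrt (2 * Real.pi * (1:NNReal)))⁻¹ * Real.exp (-(1/2) * x ^ 2)
          ≤ 1 * Real.exp (-(1/2) * x ^ 2) :=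
            mul_le_mul_of_nonneg_right h3 (Real.exp_nonneg _)
        _ = Real.exp (-(1/2) * x ^ 2) := one_mul _
    have habs : gaussianPDF 0 1 x * ENNReal.ofReal (|x| ^ p)
        ≤ ENNReal.ofReal (|x| ^ p * Real.exp (-(1/2) * x ^ 2)) := by
      rw [gaussianPDF_def, ← ENNReal.ofReal_mul (gaussianPDFReal_nonneg 0 1 x)]
      exact ENNReal.ofReal_le_ofReal (by
        rw [mul_comm (|x| ^ p)]
        exact mul_le_mul_of_nonneg_right h1 (Real.rpow_nonneg (abs_nonneg x) p))
    refine le_trans habs ?_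
    rcases le_or_gt 0 x with hx | hx
    · rw [abs_of_nonneg hx]
      exact le_add_of_le_of_nonneg le_rfl zero_le
    · rw [abs_of_neg hx]
      refine le_add_of_nonneg_of_le zero_le (le_of_eq ?_)
      rw [neg_sq]
  refine lt_of_le_of_lt (lintegral_mono key) ?_
  rw [lintegral_add_left hmg]
  have hneg : ∫⁻ x : ℝ, ENNReal.ofReal ((-x) ^ p * Real.exp (-(1/2) * (-x) ^ 2)) =
      ∫⁻ x : ℝ, ENNReal.ofReal (x ^ p * Real.exp (-(1/2) * x ^ 2)) :=
    (Measure.measurePreserving_neg (volume : Measure ℝ)).lintegral_comp hmg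
  rw [hneg]
  exact ENNReal.add_lt_top.mpr ⟨hg_fin, hg_fin⟩


/-- weight bound: `⟨n⟩^{sp} |n|^{-p} |n|^ε ≤ 2^{|sp|/2} |n|^{(s-1)p+ε}`. -/
lemma aux_weight_bound (s p ε : ℝ) (hp : 1 ≤ p) (n : ℤ) :
    (1 + (n : ℝ) ^ 2) ^ (s * p / 2) * |(n : ℝ)| ^ (-p) * |(n : ℝ)| ^ ε
      ≤ 2 ^ (|s * p| / 2) * |(n : ℝ)| ^ ((s - 1) * p + ε) := by
  rcases eq_or_ne n 0 with rfl | hn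
  · simp only [Int.cast_zero, abs_zero]
    rw [Real.zero_rpow (by linarith : -p ≠ 0)]
    have : (0:ℝ) ≤ 2 ^ (|s * p| / 2) * (0:ℝ) ^ ((s - 1) * p + ε) := by positivity
    linarith [mul_nonneg (mul_nonneg (le_of_lt (Real.rpow_pos_of_pos (by positivity) (s*p/2))) (le_refl (0:ℝ))) (Real.rpow_nonneg (le_refl (0:ℝ)) ε), this]
  · have hn1 : (1:ℝ) ≤ |(n:ℝ)| := by
      rw [← Int.cast_abs]
      exact_mod_cast Int.one_le_abs hn
    have hnpos : (0:ℝ) < |(n:ℝ)| := lt_of_lt_of_le one_pos hn1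
    have hsq : |(n:ℝ)| ^ (2:ℕ) = (n:ℝ) ^ 2 := sq_abs _
    have h1 : (1 + (n : ℝ) ^ 2) ^ (s * p / 2) ≤ 2 ^ (|s * p| / 2) * |(n : ℝ)| ^ (s * p) := by
      have habs : (|(n:ℝ)| ^ (2:ℕ)) ^ ((s * p)/2) = |(n:ℝ)| ^ (s * p) := by
        rw [← Real.rpow_natCast |(n:ℝ)| 2, ← Real.rpow_mul (abs_nonneg _)]
        norm_num
        rw [show (2:ℝ) * (s * p / 2) = s * p by ring]
      rcases le_or_gt 0 (s * p) with hsp | hsp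
      · have : 1 + (n:ℝ) ^ 2 ≤ 2 * (n:ℝ) ^ 2 := by nlinarith
        calc (1 + (n : ℝ) ^ 2) ^ (s * p / 2) ≤ (2 * (n:ℝ) ^ 2) ^ (s * p / 2) :=
              Real.rpow_le_rpow (by positivity) this (by positivity)
          _ = 2 ^ (s * p / 2) * ((n:ℝ) ^ 2) ^ (s * p / 2) :=
              Real.mul_rpow (by norm_num) (by positivity)
          _ ≤ 2 ^ (|s * p| / 2) * |(n : ℝ)| ^ (s * p) := by
              rw [← hsq, habs]
              refine mul_le_mul_of_nonneg_right ?_ (Real.rpow_nonneg (abs_nonneg _) _)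
              exact Real.rpow_le_rpow_of_exponent_le one_le_two
                (by rw [abs_of_nonneg hsp])
      · have h2 : (1 + (n : ℝ) ^ 2) ^ (s * p / 2) ≤ ((n:ℝ) ^ 2) ^ (s * p / 2) := by
          refine Real.rpow_le_rpow_of_nonpos (by positivity) (by nlinarith) (by linarith)
        calc (1 + (n : ℝ) ^ 2) ^ (s * p / 2) ≤ ((n:ℝ) ^ 2) ^ (s * p / 2) := h2
          _ = |(n : ℝ)| ^ (s * p) := by rw [← hsq, habs]
          _ ≤ 2 ^ (|s * p| / 2) * |(n : ℝ)| ^ (s * p) := by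
              nlinarith [Real.one_le_rpow one_le_two (by positivity : (0:ℝ) ≤ |s * p| / 2),
                Real.rpow_nonneg (abs_nonneg ((n:ℝ))) (s * p)]
    calc (1 + (n : ℝ) ^ 2) ^ (s * p / 2) * |(n : ℝ)| ^ (-p) * |(n : ℝ)| ^ ε
        ≤ (2 ^ (|s * p| / 2) * |(n : ℝ)| ^ (s * p)) * |(n : ℝ)| ^ (-p) * |(n : ℝ)| ^ ε := by
          refine mul_le_mul_of_nonneg_right (mul_le_mul_of_nonneg_right h1 ?_) ?_ <;>
            exact Real.rpow_nonneg (abs_nonneg _) _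
      _ = 2 ^ (|s * p| / 2) * |(n : ℝ)| ^ ((s - 1) * p + ε) := by
          rw [mul_assoc, mul_assoc, ← Real.rpow_add hnpos, ← Real.rpow_add hnpos]
          ring_nf
lemma aux_summable_s4 {b : ℝ} (hb : b < -1) : Summable fun n : ℤ => |(n:ℝ)| ^ b := by
  have := Real.summable_abs_int_rpow (b := -b) (by linarith)
  simpa using this


lemma aux_ptwise_s4 {p : ℝ} (hp : 0 ≤ p) (x y : ℝ) :
    (x ^ 2 + y ^ 2) ^ (p / 2) ≤ 2 ^ p * (|x| ^ p + |y| ^ p) := by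
  set m := max |x| |y| with hm_def
  have hm : 0 ≤ m := le_trans (abs_nonneg x) (le_max_left _ _)
  have h1 : x ^ 2 + y ^ 2 ≤ (2 * m) ^ 2 := by
    have hx : |x| ≤ m := le_max_left _ _
    have hy : |y| ≤ m := le_max_right _ _
    nlinarith [sq_abs x, sq_abs y, abs_nonneg x, abs_nonneg y]
  calc (x ^ 2 + y ^ 2) ^ (p / 2) ≤ ((2 * m) ^ 2) ^ (p / 2) :=
        Real.rpow_le_rpow (by positivity) h1 (by positivity)
    _ = (2 * m) ^ p := by
        rw [← Real.rpow_natCast (2 * m) 2, ← Real.rpow_mul (by positivity)]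
        norm_num
        rw [mul_div_cancel₀ p (two_ne_zero)]
    _ = 2 ^ p * m ^ p := Real.mul_rpow (by norm_num) hm
    _ ≤ 2 ^ p * (|x| ^ p + |y| ^ p) := by
        refine mul_le_mul_of_nonneg_left ?_ (by positivity)
        rcases max_choice |x| |y| with h | h
        · rw [hm_def, h]
          exact le_add_of_nonneg_right (Real.rpow_nonneg (abs_nonneg y) p)
        · rw [hm_def, h]
          exact le_add_of_nonneg_left (Real.rpow_nonneg (abs_nonneg x) p)



lemma aux_M_lt_top {p : ℝ} (hp : 0 ≤ p) :
    ∫⁻ z : ℝ × ℝ, ENNReal.ofReal ((z.1 ^ 2 + z.2 ^ 2) ^ (p / 2))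
      ∂((gaussianReal 0 1).prod (gaussianReal 0 1)) < ⊤ := by
  set γ := gaussianReal 0 1
  have hmx : Measurable fun x : ℝ => ENNReal.ofReal (|x| ^ p) :=
    (measurable_id.abs.pow_const p).ennreal_ofReal
  have key : ∀ z : ℝ × ℝ, ENNReal.ofReal ((z.1 ^ 2 + z.2 ^ 2) ^ (p / 2)) ≤
      ENNReal.ofReal (2 ^ p) *
        (ENNReal.ofReal (|z.1| ^ p) + ENNReal.ofReal (|z.2| ^ p)) := by
    intro z
    rw [← ENNReal.ofReal_add (by positivity) (by positivity),
      ← ENNReal.ofReal_mul (by positivity)]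
    exact ENNReal.ofReal_le_ofReal (aux_ptwise_s4 hp z.1 z.2)
  refine lt_of_le_of_lt (lintegral_mono key) ?_
  rw [lintegral_const_mul' _ _ ENNReal.ofReal_ne_top,
    lintegral_add_left (show Measurable fun z : ℝ × ℝ => ENNReal.ofReal (|z.1| ^ p) from hmx.comp measurable_fst)]
  have h1 : ∫⁻ z : ℝ × ℝ, ENNReal.ofReal (|z.1| ^ p) ∂(γ.prod γ)
      = ∫⁻ x, ENNReal.ofReal (|x| ^ p) ∂γ := by
    rw [← lintegral_map hmx measurable_fst, Measure.map_fst_prod, measure_univ, one_smul]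
  have h2 : ∫⁻ z : ℝ × ℝ, ENNReal.ofReal (|z.2| ^ p) ∂(γ.prod γ)
      = ∫⁻ x, ENNReal.ofReal (|x| ^ p) ∂γ := by
    rw [← lintegral_map hmx measurable_snd, Measure.map_snd_prod, measure_univ, one_smul]
  rw [h1, h2]
  exact ENNReal.mul_lt_top ENNReal.ofReal_lt_top
    (ENNReal.add_lt_top.mpr ⟨aux_gauss_moment hp, aux_gauss_moment hp⟩)



lemma aux_fbNorm_lt_top {a : ℤ → ℝ} {p s : ℝ} {q : ENNReal} {B r : ℝ} (hB : 0 ≤ B)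
    (hr0 : 0 ≤ r) (hr1 : r < 1) (hq : 1 ≤ q)
    (h : ∀ j, fbBlock a p s j ≤ B * r ^ j) : fbNorm a p s q < ⊤ := by
  unfold fbNorm
  split_ifs with hqt
  · refine lt_of_le_of_lt (iSup_le fun j => ?_) (ENNReal.ofReal_lt_top (r := B))
    refine ENNReal.ofReal_le_ofReal ((h j).trans ?_)
    calc B * r ^ j ≤ B * 1 := mul_le_mul_of_nonneg_left (pow_le_one₀ hr0 hr1.le) hB
      _ = B := mul_one B
  · have ht : 1 ≤ q.toReal := by
      rw [← ENNReal.toReal_one]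
      exact ENNReal.toReal_mono hqt hq
    have ht0 : 0 < q.toReal := lt_of_lt_of_le one_pos ht
    set t := q.toReal
    set ρ := ENNReal.ofReal r ^ t with hρ
    have hρ1 : ρ < 1 := by
      rcases eq_or_lt_of_le hr0 with hr | hr
      · rw [hρ, ← hr, ENNReal.ofReal_zero, ENNReal.zero_rpow_of_pos ht0]
        exact zero_lt_one
      · refine ENNReal.rpow_lt_one ?_ ht0
        rw [← ENNReal.ofReal_one]
        exact (ENNReal.ofReal_lt_ofReal_iff_of_nonneg hr0).mpr hr1
    have hsum : (∑' j : ℕ, ENNReal.ofReal (fbBlock a p s j) ^ t)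
          ≤ ENNReal.ofReal B ^ t * (1 - ρ)⁻¹ := by
        have hterm : ∀ j : ℕ, ENNReal.ofReal (fbBlock a p s j) ^ t
            ≤ ENNReal.ofReal B ^ t * ρ ^ j := by
          intro j
          have h1 : ENNReal.ofReal (fbBlock a p s j) ≤ ENNReal.ofReal B * ENNReal.ofReal r ^ j := by
            rw [← ENNReal.ofReal_pow hr0, ← ENNReal.ofReal_mul hB]
            exact ENNReal.ofReal_le_ofReal (h j)
          calc ENNReal.ofReal (fbBlock a p s j) ^ t
              ≤ (ENNReal.ofReal B * ENNReal.ofReal r ^ j) ^ t :=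
                ENNReal.rpow_le_rpow h1 ht0.le
            _ = ENNReal.ofReal B ^ t * ρ ^ j := by
                rw [ENNReal.mul_rpow_of_nonneg _ _ ht0.le, hρ,
                  ← ENNReal.rpow_natCast (ENNReal.ofReal r) j,
                  ← ENNReal.rpow_mul, mul_comm (j:ℝ) t,
                  ENNReal.rpow_mul, ENNReal.rpow_natCast]
        calc (∑' j : ℕ, ENNReal.ofReal (fbBlock a p s j) ^ t)
            ≤ ∑' j : ℕ, ENNReal.ofReal B ^ t * ρ ^ j := ENNReal.tsum_le_tsum hterm
          _ = ENNReal.ofReal B ^ t * ∑' j : ℕ, ρ ^ j := ENNReal.tsum_mul_left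
          _ = ENNReal.ofReal B ^ t * (1 - ρ)⁻¹ := by rw [ENNReal.tsum_geometric]
    have hfin : (∑' j : ℕ, ENNReal.ofReal (fbBlock a p s j) ^ t) ≠ ⊤ := by
      refine ne_of_lt (lt_of_le_of_lt hsum (ENNReal.mul_lt_top ?_ ?_))
      · exact ENNReal.rpow_lt_top_of_nonneg ht0.le ENNReal.ofReal_ne_top
      · exact ENNReal.inv_lt_top.mpr (tsub_pos_of_lt hρ1)
    exact ENNReal.rpow_lt_top_of_nonneg (by positivity) hfin

lemma aux_deterministic {a : ℤ → ℝ} (ha : ∀ n, 0 ≤ a n) {p s ε : ℝ} (hp : 1 ≤ p) (hε : 0 < ε)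
    {q : ENNReal} (hq : 1 ≤ q)
    (hS : (∑' n : ℤ, ENNReal.ofReal ((1 + (n:ℝ) ^ 2) ^ (s * p / 2) * |(n:ℝ)| ^ (-p) * |(n:ℝ)| ^ ε)
        * ENNReal.ofReal (a n ^ p)) ≠ ⊤) :
    fbNorm a p s q < ⊤ := by
  set S := ∑' n : ℤ, ENNReal.ofReal ((1 + (n:ℝ) ^ 2) ^ (s * p / 2) * |(n:ℝ)| ^ (-p) * |(n:ℝ)| ^ ε)
      * ENNReal.ofReal (a n ^ p) with hS_def
  set T := S.toReal with hT_def
  have hT : 0 ≤ T := ENNReal.toReal_nonneg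
  have hp0 : 0 < p := lt_of_lt_of_le one_pos hp
  -- nonnegativity of the summand terms
  have hw : ∀ n : ℤ, 0 ≤ (1 + (n:ℝ) ^ 2) ^ (s * p / 2) * |(n:ℝ)| ^ (-p) := fun n => by positivity
  have hterm : ∀ n : ℤ, 0 ≤ (1 + (n:ℝ) ^ 2) ^ (s * p / 2) * |(n:ℝ)| ^ (-p) * a n ^ p :=
    fun n => mul_nonneg (hw n) (Real.rpow_nonneg (ha n) p)
  -- step 1 : block sums
  have hblock : ∀ j : ℕ, (∑ n ∈ dyadicBlock j,
      (1 + (n:ℝ) ^ 2) ^ (s * p / 2) * |(n:ℝ)| ^ (-p) * a n ^ p)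
        ≤ ((2:ℝ) ^ ((j:ℝ) - 1)) ^ (-ε) * T := by
    intro j
    set c := (2:ℝ) ^ ((j:ℝ) - 1) with hc_def
    have hc : 0 < c := Real.rpow_pos_of_pos two_pos _
    have hstep : ∀ n ∈ dyadicBlock j,
        (1 + (n:ℝ) ^ 2) ^ (s * p / 2) * |(n:ℝ)| ^ (-p) * a n ^ p
          ≤ c ^ (-ε) * ((1 + (n:ℝ) ^ 2) ^ (s * p / 2) * |(n:ℝ)| ^ (-p) * |(n:ℝ)| ^ ε
              * a n ^ p) := by
      intro n hn
      have hmem := (Finset.mem_filter.mp hn).2.1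
      have hcast : (2:ℝ) ^ (j:ℕ) < 2 * |(n:ℝ)| := by
        rw [← Int.cast_abs]
        exact_mod_cast hmem
      have hcn : c ≤ |(n:ℝ)| := by
        rw [hc_def, Real.rpow_sub two_pos, Real.rpow_one, Real.rpow_natCast]
        linarith
      have hcε : c ^ ε ≤ |(n:ℝ)| ^ ε := Real.rpow_le_rpow hc.le hcn hε.le
      have h0 : 0 ≤ (1 + (n:ℝ) ^ 2) ^ (s * p / 2) * |(n:ℝ)| ^ (-p) * a n ^ p := hterm n
      calc (1 + (n:ℝ) ^ 2) ^ (s * p / 2) * |(n:ℝ)| ^ (-p) * a n ^ p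
          = c ^ (-ε) * (c ^ ε * ((1 + (n:ℝ) ^ 2) ^ (s * p / 2) * |(n:ℝ)| ^ (-p) * a n ^ p)) := by
            rw [← mul_assoc, ← Real.rpow_add hc]
            simp
        _ ≤ c ^ (-ε) * (|(n:ℝ)| ^ ε * ((1 + (n:ℝ) ^ 2) ^ (s * p / 2) * |(n:ℝ)| ^ (-p) * a n ^ p)) := by
            refine mul_le_mul_of_nonneg_left (mul_le_mul_of_nonneg_right hcε h0)
              (Real.rpow_nonneg hc.le _)
        _ = c ^ (-ε) * ((1 + (n:ℝ) ^ 2) ^ (s * p / 2) * |(n:ℝ)| ^ (-p) * |(n:ℝ)| ^ ε * a n ^ p) := by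
            ring
    have hsub : (∑ n ∈ dyadicBlock j,
        (1 + (n:ℝ) ^ 2) ^ (s * p / 2) * |(n:ℝ)| ^ (-p) * |(n:ℝ)| ^ ε * a n ^ p) ≤ T := by
      have h1 : ENNReal.ofReal (∑ n ∈ dyadicBlock j,
          (1 + (n:ℝ) ^ 2) ^ (s * p / 2) * |(n:ℝ)| ^ (-p) * |(n:ℝ)| ^ ε * a n ^ p) ≤ S := by
        rw [ENNReal.ofReal_sum_of_nonneg (fun n _ =>
          mul_nonneg (mul_nonneg (hw n) (Real.rpow_nonneg (abs_nonneg _) ε))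
            (Real.rpow_nonneg (ha n) p))]
        refine le_trans (le_of_eq (Finset.sum_congr rfl fun n _ => ENNReal.ofReal_mul
          (mul_nonneg (hw n) (Real.rpow_nonneg (abs_nonneg _) ε)))) ?_
        exact ENNReal.sum_le_tsum (dyadicBlock j)
      have h2 := ENNReal.toReal_mono hS h1
      rwa [ENNReal.toReal_ofReal (Finset.sum_nonneg fun n _ =>
        mul_nonneg (mul_nonneg (hw n) (Real.rpow_nonneg (abs_nonneg _) ε))
          (Real.rpow_nonneg (ha n) p))] at h2
    calc (∑ n ∈ dyadicBlock j, (1 + (n:ℝ) ^ 2) ^ (s * p / 2) * |(n:ℝ)| ^ (-p) * a n ^ p)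
        ≤ ∑ n ∈ dyadicBlock j, c ^ (-ε) * ((1 + (n:ℝ) ^ 2) ^ (s * p / 2) * |(n:ℝ)| ^ (-p)
            * |(n:ℝ)| ^ ε * a n ^ p) := Finset.sum_le_sum hstep
      _ = c ^ (-ε) * ∑ n ∈ dyadicBlock j, (1 + (n:ℝ) ^ 2) ^ (s * p / 2) * |(n:ℝ)| ^ (-p)
            * |(n:ℝ)| ^ ε * a n ^ p := by rw [Finset.mul_sum]
      _ ≤ c ^ (-ε) * T := mul_le_mul_of_nonneg_left hsub (Real.rpow_nonneg hc.le _)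
  -- step 2 : geometric bound on fbBlock
  set r := (2:ℝ) ^ (-(ε / p)) with hr_def
  have hr0 : 0 < r := Real.rpow_pos_of_pos two_pos _
  have hr1 : r < 1 := Real.rpow_lt_one_of_one_lt_of_neg one_lt_two
    (neg_lt_zero.mpr (by positivity))
  set B := (2:ℝ) ^ (ε / p) * T ^ (1 / p) with hB_def
  have hB : 0 ≤ B := by positivity
  refine aux_fbNorm_lt_top hB hr0.le hr1 hq ?_
  intro j
  have h1 : fbBlock a p s j ≤ (((2:ℝ) ^ ((j:ℝ) - 1)) ^ (-ε) * T) ^ (1 / p) := by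
    unfold fbBlock
    exact Real.rpow_le_rpow (Finset.sum_nonneg fun n _ => hterm n) (hblock j) (by positivity)
  refine h1.trans (le_of_eq ?_)
  rw [Real.mul_rpow (Real.rpow_nonneg (Real.rpow_pos_of_pos two_pos _).le _) hT,
    ← Real.rpow_mul two_pos.le, ← Real.rpow_mul two_pos.le,
    show ((j:ℝ) - 1) * -ε * (1 / p) = ε / p + (j:ℝ) * (-(ε / p)) by field_simp; ring,
    Real.rpow_add two_pos, hr_def, ← Real.rpow_natCast ((2:ℝ) ^ (-(ε / p))) j,
    ← Real.rpow_mul two_pos.le, mul_comm (-(ε / p)) (j:ℝ)]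
  ring



/-- If `1 ≤ p < ∞`, `1 ≤ q ≤ ∞` and `(s-1)p < -1`, then the Fourier–Wiener series
belongs almost surely to the Fourier–Besov space `b̂^s_{p,q}(𝕋)`. -/
theorem brownian_in_FourierBesov
    {Ω : Type*} [MeasurableSpace Ω] (P : Measure Ω) [IsProbabilityMeasure P]
    (g : ℤ → Ω → ℂ) (hg : IsStdComplexGaussianFamily P g)
    (p s : ℝ) (q : ENNReal) (hp : 1 ≤ p) (hq : 1 ≤ q) (hsp : (s - 1) * p < -1) :
    ∀ᵐ ω ∂P, fbNorm (fun n => ‖g n ω‖) p s q < ⊤ := by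
  obtain ⟨hind, hmap⟩ := hg
  set ε := (-1 - (s - 1) * p) / 2 with hε_def
  have hε : 0 < ε := by rw [hε_def]; linarith
  have hb : (s - 1) * p + ε < -1 := by rw [hε_def]; linarith
  have hp0 : 0 < p := lt_of_lt_of_le one_pos hp
  set w : ℤ → ℝ := fun n =>
    (1 + (n:ℝ) ^ 2) ^ (s * p / 2) * |(n:ℝ)| ^ (-p) * |(n:ℝ)| ^ ε with hw_def
  set c : ℤ → ENNReal := fun n => ENNReal.ofReal (w n) with hc_def
  have hw_nonneg : ∀ n, 0 ≤ w n := fun n => by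
    rw [hw_def]; positivity
  have hc0 : c 0 = 0 := by
    rw [hc_def, hw_def]
    simp only [Int.cast_zero, abs_zero]
    rw [Real.zero_rpow (by linarith : -p ≠ 0)]
    simp
  have hCsum : (∑' n : ℤ, c n) ≠ ⊤ := by
    have hKs : Summable (fun n : ℤ =>
        (2:ℝ) ^ (|s * p| / 2) * |(n:ℝ)| ^ ((s - 1) * p + ε)) :=
      (aux_summable_s4 hb).mul_left _
    have h1 : (∑' n : ℤ, c n) ≤ ∑' n : ℤ,
        ENNReal.ofReal ((2:ℝ) ^ (|s * p| / 2) * |(n:ℝ)| ^ ((s - 1) * p + ε)) := by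
      refine ENNReal.tsum_le_tsum fun n => ?_
      rw [hc_def, hw_def]
      exact ENNReal.ofReal_le_ofReal (aux_weight_bound s p ε hp n)
    refine ne_of_lt (lt_of_le_of_lt h1 ?_)
    rw [← ENNReal.ofReal_tsum_of_nonneg (fun n => by positivity) hKs]
    exact ENNReal.ofReal_lt_top
  set F : ℤ → Ω → ENNReal := fun n ω => ENNReal.ofReal (‖g n ω‖ ^ p) with hF_def
  set M := ∫⁻ z : ℝ × ℝ, ENNReal.ofReal ((z.1 ^ 2 + z.2 ^ 2) ^ (p / 2))
      ∂((gaussianReal 0 1).prod (gaussianReal 0 1)) with hM_def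
  have hM : M < ⊤ := aux_M_lt_top hp0.le
  have hφ : Measurable fun z : ℝ × ℝ => ENNReal.ofReal ((z.1 ^ 2 + z.2 ^ 2) ^ (p / 2)) :=
    (((measurable_fst.pow_const 2).add (measurable_snd.pow_const 2)).pow_const
      (p / 2)).ennreal_ofReal
  have key : ∀ n : ℤ, n ≠ 0 → AEMeasurable (F n) P ∧ ∫⁻ ω, F n ω ∂P = M := by
    intro n hn
    have hre_map : P.map (fun ω => (g n ω).re) = gaussianReal 0 1 := by
      simpa using hmap ⟨⟨n, hn⟩, true⟩
    have him_map : P.map (fun ω => (g n ω).im) = gaussianReal 0 1 := by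
      simpa using hmap ⟨⟨n, hn⟩, false⟩
    have hre_am : AEMeasurable (fun ω => (g n ω).re) P := by
      by_contra h
      rw [Measure.map_of_not_aemeasurable h] at hre_map
      have : (0 : Measure ℝ) Set.univ = (gaussianReal 0 1) Set.univ := by rw [hre_map]
      simp [measure_univ] at this
    have him_am : AEMeasurable (fun ω => (g n ω).im) P := by
      by_contra h
      rw [Measure.map_of_not_aemeasurable h] at him_map
      have : (0 : Measure ℝ) Set.univ = (gaussianReal 0 1) Set.univ := by rw [him_map]
      simp [measure_univ] at this
    have hindep : IndepFun (fun ω => (g n ω).re) (fun ω => (g n ω).im) P := by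
      have := hind.indepFun (i := (⟨⟨n, hn⟩, true⟩ : {m : ℤ // m ≠ 0} × Bool))
        (j := ⟨⟨n, hn⟩, false⟩) (by simp)
      simpa using this
    have hpair : P.map (fun ω => ((g n ω).re, (g n ω).im))
        = (gaussianReal 0 1).prod (gaussianReal 0 1) := by
      rw [(indepFun_iff_map_prod_eq_prod_map_map hre_am him_am).mp hindep, hre_map, him_map]
    have habs : ∀ ω, F n ω =
        (fun z : ℝ × ℝ => ENNReal.ofReal ((z.1 ^ 2 + z.2 ^ 2) ^ (p / 2)))
          ((g n ω).re, (g n ω).im) := by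
      intro ω
      rw [hF_def]
      simp only
      congr 1
      have h1 : ‖g n ω‖ = ((g n ω).re ^ 2 + (g n ω).im ^ 2) ^ ((1:ℝ) / 2) := by
        rw [Complex.norm_def, Complex.normSq_apply, Real.sqrt_eq_rpow]
        congr 1
        ring
      rw [h1, ← Real.rpow_mul (by positivity), one_div_mul_eq_div]
    have hF_eq : F n = fun ω =>
        (fun z : ℝ × ℝ => ENNReal.ofReal ((z.1 ^ 2 + z.2 ^ 2) ^ (p / 2)))
          ((g n ω).re, (g n ω).im) := funext habs
    constructor
    · rw [hF_eq]
      exact hφ.comp_aemeasurable (hre_am.prodMk him_am)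
    · calc ∫⁻ ω, F n ω ∂P
          = ∫⁻ ω, (fun z : ℝ × ℝ => ENNReal.ofReal ((z.1 ^ 2 + z.2 ^ 2) ^ (p / 2)))
              ((g n ω).re, (g n ω).im) ∂P := lintegral_congr habs
        _ = ∫⁻ z : ℝ × ℝ, ENNReal.ofReal ((z.1 ^ 2 + z.2 ^ 2) ^ (p / 2))
              ∂(P.map fun ω => ((g n ω).re, (g n ω).im)) :=
            (lintegral_map' hφ.aemeasurable (hre_am.prodMk him_am)).symm
        _ = M := by rw [hpair, hM_def]
  have hterm_am : ∀ n : ℤ, AEMeasurable (fun ω => c n * F n ω) P := by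
    intro n
    rcases eq_or_ne n 0 with rfl | hn
    · have : (fun ω => c 0 * F 0 ω) = fun _ => 0 := by
        funext ω; rw [hc0, zero_mul]
      rw [this]; exact aemeasurable_const
    · exact ((key n hn).1.const_mul (c n))
  have hfin : ∫⁻ ω, (∑' n : ℤ, c n * F n ω) ∂P ≠ ⊤ := by
    rw [lintegral_tsum hterm_am]
    have hle : ∀ n : ℤ, ∫⁻ ω, c n * F n ω ∂P ≤ c n * M := by
      intro n
      rw [lintegral_const_mul' _ _ ENNReal.ofReal_ne_top]
      rcases eq_or_ne n 0 with rfl | hn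
      · rw [show ENNReal.ofReal (w 0) = 0 from hc0, zero_mul]
        exact zero_le
      · rw [(key n hn).2]
    refine ne_of_lt (lt_of_le_of_lt (ENNReal.tsum_le_tsum hle) ?_)
    rw [ENNReal.tsum_mul_right]
    exact ENNReal.mul_lt_top hCsum.lt_top hM
  have hae := ae_lt_top' (AEMeasurable.ennreal_tsum hterm_am) hfin
  filter_upwards [hae] with ω hω
  refine aux_deterministic (fun n => norm_nonneg _) hp hε hq ?_
  have : (∑' n : ℤ, c n * F n ω) =
      ∑' n : ℤ, ENNReal.ofReal
          ((1 + (n:ℝ) ^ 2) ^ (s * p / 2) * |(n:ℝ)| ^ (-p) * |(n:ℝ)| ^ ε)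
        * ENNReal.ofReal (‖g n ω‖ ^ p) := by
    refine tsum_congr fun n => ?_
    rw [hc_def, hw_def, hF_def]
  rw [← this]
  exact ne_of_lt hω
end
end

section
/- Let 1 ≤ p < ∞, 1 ≤ q < ∞ and s ∈ ℝ with (s−1)p ≥ −1. Then almost surely ( Σ_{j≥0} ( Σ_{|n|∼2^j} ⟨n⟩^{sp} |n|^{−p} |g_n|^p )^{q/p} )^{1/q} = ∞; that is, the Fourier–Wiener series u almost surely does not belong to the Fourier–Besov space b̂^s_{p,q}(𝕋). -/
open MeasureTheory ProbabilityTheory Filter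

noncomputable section

section AuxLemmas


lemma BNB.tsum_eq_top {f : ℕ → ENNReal} {c : ENNReal} (hc : c ≠ 0)
    (h : {j | c ≤ f j}.Infinite) : ∑' j, f j = ⊤ := by
  have h1 : (∑' j : {j | c ≤ f j}, f j) = ⊤ := by
    refine eq_top_iff.2 ?_
    calc (⊤ : ENNReal) = ∑' _ : {j | c ≤ f j}, c := by
          haveI : Infinite {j | c ≤ f j} := h.to_subtype
          exact (ENNReal.tsum_const_eq_top_of_ne_zero hc).symm
      _ ≤ _ := ENNReal.tsum_le_tsum fun j => j.2
  refine eq_top_iff.2 ?_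
  rw [← h1]
  exact ENNReal.tsum_comp_le_tsum_of_injective Subtype.val_injective _

lemma BNB.exists_threshold :
    ∃ t : ℝ, 0 < t ∧ 3/4 ≤ (gaussianReal 0 1 {x : ℝ | t ≤ |x|}).toReal ∧
      (gaussianReal 0 1 {x : ℝ | t ≤ |x|}).toReal ≤ 1 := by
  set γ := gaussianReal 0 1 with hγ
  have habs : γ {(0:ℝ)} = 0 :=
    (gaussianReal_absolutelyContinuous 0 one_ne_zero) (measure_singleton 0)
  have hmono : Monotone (fun k : ℕ => {x : ℝ | 1/(k+1:ℝ) ≤ |x|}) := by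
    intro a b hab x hx
    simp only [Set.mem_setOf_eq] at hx ⊢
    refine le_trans ?_ hx
    apply one_div_le_one_div_of_le (by positivity)
    have : (a:ℝ) ≤ b := Nat.cast_le.2 hab
    linarith
  have hunion : (⋃ k : ℕ, {x : ℝ | 1/(k+1:ℝ) ≤ |x|}) = {(0:ℝ)}ᶜ := by
    ext x
    simp only [Set.mem_iUnion, Set.mem_setOf_eq, Set.mem_compl_iff, Set.mem_singleton_iff]
    constructor
    · rintro ⟨k, hk⟩ rfl
      rw [abs_zero] at hk
      exact absurd hk (not_le.2 (by positivity))
    · intro hx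
      have : 0 < |x| := abs_pos.2 hx
      obtain ⟨k, hk⟩ := exists_nat_one_div_lt this
      exact ⟨k, hk.le⟩
  have htend : Tendsto (fun k : ℕ => γ {x : ℝ | 1/(k+1:ℝ) ≤ |x|}) atTop (nhds 1) := by
    have := tendsto_measure_iUnion_atTop (μ := γ) hmono
    rw [hunion] at this
    have hcompl : γ {(0:ℝ)}ᶜ = 1 := by
      rw [measure_compl (measurableSet_singleton 0) (measure_ne_top _ _), habs, measure_univ]
      simp
    rw [hcompl] at this
    exact this
  have hev : ∀ᶠ k : ℕ in atTop, ENNReal.ofReal (3/4) < γ {x : ℝ | 1/(k+1:ℝ) ≤ |x|} :=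
    htend.eventually_const_lt (ENNReal.ofReal_lt_one.2 (by norm_num))
  obtain ⟨k, hk⟩ := hev.exists
  refine ⟨1/(k+1:ℝ), by positivity, ?_, ?_⟩
  · have h1 : γ {x : ℝ | 1/(k+1:ℝ) ≤ |x|} ≠ ⊤ := measure_ne_top _ _
    have := ENNReal.ofReal_le_of_le_toReal (le_refl (γ {x : ℝ | 1/(k+1:ℝ) ≤ |x|}).toReal)
    rw [← ENNReal.ofReal_le_iff_le_toReal h1]
    exact hk.le
  · calc (γ {x : ℝ | 1/(k+1:ℝ) ≤ |x|}).toReal ≤ (1 : ENNReal).toReal := by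
          exact ENNReal.toReal_mono (by simp) prob_le_one
      _ = 1 := by simp



lemma BNB.iIndepFun_congr {Ω ι : Type*} [MeasurableSpace Ω] {P : Measure Ω}
    {f f' : ι → Ω → ℝ} (hf : iIndepFun f P)
    (h : ∀ i, f i =ᵐ[P] f' i) : iIndepFun f' P := by
  classical
  rw [iIndepFun_iff_measure_inter_preimage_eq_mul] at hf ⊢
  intro S sets hsets
  have key : ∀ i ∈ S, (f' i ⁻¹' sets i : Set Ω) =ᵐ[P] (f i ⁻¹' sets i) := by
    intro i _
    rw [Filter.eventuallyEq_set]
    filter_upwards [h i] with ω hω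
    simp [Set.mem_preimage, hω]
  have hinter : (⋂ i ∈ S, f' i ⁻¹' sets i) =ᵐ[P] (⋂ i ∈ S, f i ⁻¹' sets i) := by
    rw [Filter.eventuallyEq_set]
    have := (ae_ball_iff S.countable_toSet).2 fun i hi =>
      (Filter.eventuallyEq_set.1 (key i hi))
    filter_upwards [this] with ω hω
    simp only [Set.mem_iInter]
    exact ⟨fun H i hi => (hω i hi).1 (H i hi), fun H i hi => (hω i hi).2 (H i hi)⟩
  rw [measure_congr hinter, hf S hsets]
  exact Finset.prod_congr rfl fun i hi => (measure_congr (key i hi)).symm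

lemma BNB.iIndepSet_blocks {Ω : Type*} [MeasurableSpace Ω] {P : Measure Ω}
    [IsProbabilityMeasure P]
    {I : Type*} {F : I → Ω → ℝ} (hF : ∀ i, Measurable (F i))
    (hind : iIndepFun F P)
    (T : ℕ → Finset I) (hT : Pairwise fun j k => Disjoint (T j) (T k))
    (A : ℕ → Set Ω)
    (hA : ∀ j, MeasurableSet[⨆ i ∈ (T j : Set I),
      MeasurableSpace.comap (F i) inferInstance] (A j)) :
    iIndepSet A P := by
  classical
  set m : I → MeasurableSpace Ω := fun i => MeasurableSpace.comap (F i) inferInstance with hm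
  have hle : ∀ i, m i ≤ ‹MeasurableSpace Ω› := fun i => (hF i).comap_le
  have hAmeas : ∀ j, MeasurableSet (A j) := by
    intro j
    have h2 : (⨆ i ∈ (T j : Set I), m i) ≤ ‹MeasurableSpace Ω› :=
      iSup_le fun i => iSup_le fun _ => hle i
    exact h2 _ (hA j)
  rw [iIndepSet_iff_meas_biInter hAmeas]
  intro S
  induction S using Finset.induction_on with
  | empty => simp
  | @insert j0 S hj0 ih =>
    have hdisj : Disjoint ((T j0 : Set I)) (⋃ j ∈ (S : Set ℕ), (T j : Set I)) := by
      rw [Set.disjoint_iUnion_right]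
      intro j
      rw [Set.disjoint_iUnion_right]
      intro hj
      exact Finset.disjoint_coe.2 (hT (fun hjj => hj0 (hjj ▸ hj)))
    have hindep : Indep (⨆ i ∈ (T j0 : Set I), m i)
        (⨆ i ∈ (⋃ j ∈ (S : Set ℕ), (T j : Set I)), m i) P :=
      indep_iSup_of_disjoint hle hind.iIndep hdisj
    have h1 : MeasurableSet[⨆ i ∈ (⋃ j ∈ (S : Set ℕ), (T j : Set I)), m i] (⋂ j ∈ S, A j) := by
      refine MeasurableSet.biInter S.countable_toSet fun j hj => ?_
      have hsub : (⨆ i ∈ (T j : Set I), m i) ≤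
          ⨆ i ∈ (⋃ j ∈ (S : Set ℕ), (T j : Set I)), m i := by
        refine biSup_mono fun i hi => ?_
        exact Set.mem_biUnion hj hi
      exact hsub _ (hA j)
    rw [Finset.set_biInter_insert, Finset.prod_insert hj0, ← ih]
    exact (Indep_iff _ _ _).1 hindep _ _ (hA j0) h1


namespace BNB

def PB (j : ℕ) : Finset ℤ := Finset.Ioc ((2 ^ j : ℤ) / 2) (2 ^ j)

lemma one_le_two_pow {j : ℕ} : (1 : ℤ) ≤ 2 ^ j := one_le_pow₀ one_le_two

lemma PB_pos {j : ℕ} {n : ℤ} (hn : n ∈ PB j) : 0 < n := by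
  have h := Finset.mem_Ioc.1 hn
  have h1 : (1 : ℤ) ≤ 2 ^ j := one_le_two_pow
  omega

lemma PB_ne {j : ℕ} {n : ℤ} (hn : n ∈ PB j) : n ≠ 0 := (PB_pos hn).ne'

lemma PB_le {j : ℕ} {n : ℤ} (hn : n ∈ PB j) : n ≤ 2 ^ j := (Finset.mem_Ioc.1 hn).2

lemma PB_subset {j : ℕ} : PB j ⊆ dyadicBlock j := by
  intro n hn
  have h := Finset.mem_Ioc.1 hn
  have h1 : (1 : ℤ) ≤ 2 ^ j := one_le_two_pow
  have hpos : 0 < n := PB_pos hn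
  simp only [dyadicBlock, Finset.mem_filter, Finset.mem_Icc]
  rw [abs_of_pos hpos]
  omega

lemma PB_disjoint : Pairwise fun j k => Disjoint (PB j) (PB k) := by
  have key : ∀ j k : ℕ, j < k → Disjoint (PB j) (PB k) := by
    intro j k hjk
    rw [Finset.disjoint_left]
    intro n hnj hnk
    have h1 := Finset.mem_Ioc.1 hnj
    have h2 := Finset.mem_Ioc.1 hnk
    have h3 : (2:ℤ) ^ j * 2 ≤ 2 ^ k := by
      calc (2:ℤ) ^ j * 2 = 2 ^ (j+1) := by ring
        _ ≤ 2 ^ k := pow_le_pow_right₀ one_le_two hjk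
    omega
  intro j k hjk
  rcases lt_or_gt_of_ne hjk with h | h
  · exact key j k h
  · exact (key k j h).symm

def NB (j : ℕ) : ℕ := (PB j).card

lemma NB_lb {j : ℕ} : (2 : ℤ) ^ j ≤ 2 * NB j := by
  have h1 : (1 : ℤ) ≤ 2 ^ j := one_le_two_pow
  have : (NB j : ℤ) = 2 ^ j - 2 ^ j / 2 := by
    rw [NB, PB, Int.card_Ioc]
    omega
  omega

lemma NB_pos {j : ℕ} : 0 < NB j := by
  have := @NB_lb j
  have h1 : (1 : ℤ) ≤ 2 ^ j := one_le_two_pow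
  omega

lemma NB_ge {j : ℕ} (hj : 4 ≤ j) : 8 ≤ NB j := by
  have := @NB_lb j
  have h1 : (2:ℤ) ^ 4 ≤ 2 ^ j := pow_le_pow_right₀ one_le_two hj
  norm_num at h1
  omega


lemma term_nonneg (z : ℤ → ℝ) (hz : ∀ n, 0 ≤ z n) (p s : ℝ) (n : ℤ) :
    0 ≤ (1 + (n:ℝ)^2) ^ (s * p / 2) * |(n:ℝ)| ^ (-p) * z n ^ p := by
  have h1 : (0:ℝ) ≤ (1 + (n:ℝ)^2) ^ (s * p / 2) := Real.rpow_nonneg (by positivity) _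
  have h2 : (0:ℝ) ≤ |(n:ℝ)| ^ (-p) := Real.rpow_nonneg (abs_nonneg _) _
  have h3 : (0:ℝ) ≤ z n ^ p := Real.rpow_nonneg (hz n) _
  positivity

lemma sum_lower {p s t : ℝ} (hp : 1 ≤ p) (hsp : -1 ≤ (s - 1) * p) (ht : 0 < t) (j : ℕ)
    (z r : ℤ → ℝ) (hz : ∀ n, 0 ≤ z n) (hr : ∀ n, |r n| ≤ z n)
    (hcount : (NB j : ℝ) / 2 ≤ ∑ n ∈ PB j, (if t ≤ |r n| then (1:ℝ) else 0)) :
    min 1 ((2:ℝ) ^ (s * p / 2)) * t ^ p / 4 ≤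
      ∑ n ∈ dyadicBlock j, (1 + (n:ℝ)^2) ^ (s * p / 2) * |(n:ℝ)| ^ (-p) * z n ^ p := by
  set e : ℝ := s * p / 2 with he
  set κ : ℝ := min 1 ((2:ℝ) ^ e) with hκdef
  have hκpos : 0 < κ := lt_min one_pos (Real.rpow_pos_of_pos two_pos e)
  have htp : (0:ℝ) < t ^ p := Real.rpow_pos_of_pos ht p
  have hp0 : (0:ℝ) ≤ p := le_trans zero_le_one hp
  set c0 : ℝ := κ * ((2:ℝ) ^ j)⁻¹ * t ^ p with hc0def
  have h2j : (0:ℝ) < (2:ℝ) ^ j := by positivity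
  have hc0 : 0 < c0 := by positivity
  -- termwise bound on PB j
  have hterm : ∀ n ∈ PB j, c0 * (if t ≤ |r n| then (1:ℝ) else 0) ≤
      (1 + (n:ℝ)^2) ^ e * |(n:ℝ)| ^ (-p) * z n ^ p := by
    intro n hn
    by_cases hind : t ≤ |r n|
    · rw [if_pos hind, mul_one]
      have hx1 : (1:ℝ) ≤ (n:ℝ) := by
        have h := PB_pos hn
        have h' : (1:ℤ) ≤ n := h
        exact_mod_cast h'
      set x : ℝ := (n:ℝ) with hxdef
      have hx0 : 0 < x := lt_of_lt_of_le one_pos hx1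
      have hxle : x ≤ (2:ℝ) ^ j := by
        have := PB_le hn
        calc x ≤ ((2 ^ j : ℤ) : ℝ) := by
              rw [hxdef]; exact_mod_cast (PB_le hn)
          _ = (2:ℝ) ^ j := by push_cast; ring
      have habs : |x| = x := abs_of_pos hx0
      have hx2e : (x ^ (2:ℕ)) ^ e = x ^ (s * p) := by
        rw [show (x ^ (2:ℕ)) = x ^ ((2:ℕ):ℝ) from (Real.rpow_natCast x 2).symm,
          ← Real.rpow_mul hx0.le]
        all_goals congr 1
        all_goals (rw [he]; push_cast; ring)
      have key1 : κ * x ^ (s * p) ≤ (1 + x ^ 2) ^ e := by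
        rcases le_or_gt 0 e with he0 | he0
        · have h1 : (x ^ (2:ℕ)) ^ e ≤ (1 + x ^ 2) ^ e := by
            apply Real.rpow_le_rpow (by positivity) (by nlinarith) he0
          calc κ * x ^ (s * p) ≤ 1 * x ^ (s * p) := by
                apply mul_le_mul_of_nonneg_right (min_le_left _ _)
                  (Real.rpow_nonneg hx0.le _)
            _ = (x ^ (2:ℕ)) ^ e := by rw [one_mul, hx2e]
            _ ≤ _ := h1
        · have h1 : (2 * x ^ 2) ^ e ≤ (1 + x ^ 2) ^ e := by
            apply Real.rpow_le_rpow_of_nonpos (by positivity) (by nlinarith) he0.le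
          calc κ * x ^ (s * p) ≤ (2:ℝ) ^ e * x ^ (s * p) := by
                apply mul_le_mul_of_nonneg_right (min_le_right _ _)
                  (Real.rpow_nonneg hx0.le _)
            _ = (2 * x ^ 2) ^ e := by
                rw [Real.mul_rpow (by norm_num) (by positivity), ← hx2e]
            _ ≤ _ := h1
      have key2 : x ^ ((s - 1) * p) ≥ ((2:ℝ) ^ j)⁻¹ := by
        calc ((2:ℝ) ^ j)⁻¹ ≤ x⁻¹ := by
              exact inv_anti₀ hx0 hxle
          _ = x ^ (-1 : ℝ) := (Real.rpow_neg_one x).symm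
          _ ≤ x ^ ((s - 1) * p) := Real.rpow_le_rpow_of_exponent_le hx1 hsp
      have key3 : t ^ p ≤ z n ^ p :=
        Real.rpow_le_rpow ht.le (le_trans hind (hr n)) hp0
      have hxsp : x ^ (s * p) * x ^ (-p) = x ^ ((s - 1) * p) := by
        rw [← Real.rpow_add hx0]
        ring_nf
      calc c0 = κ * ((2:ℝ) ^ j)⁻¹ * t ^ p := rfl
        _ ≤ κ * x ^ ((s - 1) * p) * (z n ^ p) := by
            apply mul_le_mul (mul_le_mul_of_nonneg_left key2 hκpos.le) key3 htp.le
            positivity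
        _ = (κ * x ^ (s * p)) * x ^ (-p) * z n ^ p := by
            rw [mul_assoc κ (x ^ (s*p)) (x ^ (-p)), hxsp]
        _ ≤ (1 + x ^ 2) ^ e * x ^ (-p) * z n ^ p := by
            apply mul_le_mul_of_nonneg_right
              (mul_le_mul_of_nonneg_right key1 (Real.rpow_nonneg hx0.le _))
              (Real.rpow_nonneg (hz n) _)
        _ = (1 + x ^ 2) ^ e * |x| ^ (-p) * z n ^ p := by rw [habs]
    · rw [if_neg hind, mul_zero]
      exact term_nonneg z hz p s n
  have hNlb : (2:ℝ) ^ j ≤ 2 * (NB j : ℝ) := by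
    have := @NB_lb j
    calc (2:ℝ) ^ j = ((2 ^ j : ℤ) : ℝ) := by push_cast; ring
      _ ≤ ((2 * NB j : ℤ) : ℝ) := by exact_mod_cast this
      _ = 2 * (NB j : ℝ) := by push_cast; ring
  calc κ * t ^ p / 4 ≤ c0 * ((NB j : ℝ) / 2) := by
        have hN0 : (0:ℝ) < (NB j : ℝ) := by exact_mod_cast @NB_pos j
        have key : ((2 * (NB j : ℝ))⁻¹ * ((NB j : ℝ)/2)) = 1/4 := by
          field_simp
          ring
        have hinvle : (2 * (NB j : ℝ))⁻¹ ≤ ((2:ℝ)^j)⁻¹ := inv_anti₀ h2j hNlb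
        calc κ * t ^ p / 4 = κ * t ^ p * ((2 * (NB j : ℝ))⁻¹ * ((NB j : ℝ)/2)) := by
              rw [key]; ring
          _ ≤ κ * t ^ p * (((2:ℝ)^j)⁻¹ * ((NB j : ℝ)/2)) := by
              apply mul_le_mul_of_nonneg_left
                (mul_le_mul_of_nonneg_right hinvle (by positivity)) (by positivity)
          _ = c0 * ((NB j : ℝ)/2) := by rw [hc0def]; ring
    _ ≤ c0 * ∑ n ∈ PB j, (if t ≤ |r n| then (1:ℝ) else 0) :=
        mul_le_mul_of_nonneg_left hcount hc0.le
    _ = ∑ n ∈ PB j, c0 * (if t ≤ |r n| then (1:ℝ) else 0) := Finset.mul_sum _ _ _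
    _ ≤ ∑ n ∈ PB j, (1 + (n:ℝ)^2) ^ e * |(n:ℝ)| ^ (-p) * z n ^ p :=
        Finset.sum_le_sum hterm
    _ ≤ _ := Finset.sum_le_sum_of_subset_of_nonneg PB_subset
        (fun n _ _ => term_nonneg z hz p s n)


end BNB


lemma BNB.cheb {Ω : Type*} [MeasurableSpace Ω] {P : Measure Ω} [IsProbabilityMeasure P]
    {ι : Type*} {Y : ι → Ω → ℝ} (s : Finset ι) {θ : ℝ}
    (hmem : ∀ i, MemLp (Y i) 2 P)
    (hind : Set.Pairwise ↑s fun i j => IndepFun (Y i) (Y j) P)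
    (hsq : ∀ i, Y i ^ 2 = Y i)
    (hmean : ∀ i, ∫ ω, Y i ω ∂P = θ)
    (hθ : 3/4 ≤ θ) (hθ1 : θ ≤ 1)
    (hcard : 8 ≤ (s.card : ℝ)) :
    P {ω | ¬ ((s.card : ℝ)/2 ≤ ∑ i ∈ s, Y i ω)} ≤ ENNReal.ofReal (1/2) := by
  classical
  set N : ℝ := (s.card : ℝ) with hN
  have hN0 : 0 < N := lt_of_lt_of_le (by norm_num) hcard
  set S : Ω → ℝ := ∑ i ∈ s, Y i with hS
  have hSmem : MemLp S 2 P := memLp_finset_sum' s fun i _ => hmem i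
  have hES : P[S] = N * θ := by
    rw [hS]
    rw [show (∫ x, (∑ i ∈ s, Y i) x ∂P) = ∫ x, ∑ i ∈ s, Y i x ∂P from by
      congr 1; ext x; simp [Finset.sum_apply]]
    rw [integral_finset_sum s fun i _ => ((hmem i).integrable one_le_two)]
    simp only [hmean]
    rw [Finset.sum_const, nsmul_eq_mul, hN]
  have hvari : ∀ i, variance (Y i) P = θ - θ ^ 2 := by
    intro i
    rw [variance_eq_sub (hmem i)]
    rw [show (∫ x, (Y i ^ 2) x ∂P) = ∫ x, Y i x ∂P from by rw [hsq i]]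
    rw [hmean i]
  have hVar : variance S P ≤ N / 4 := by
    rw [hS, IndepFun.variance_sum (fun i _ => hmem i) hind]
    simp only [hvari]
    rw [Finset.sum_const, nsmul_eq_mul, ← hN]
    have : θ - θ ^ 2 ≤ 1/4 := by nlinarith
    nlinarith
  set c : ℝ := N * θ - N / 2 with hc
  have hcN : N / 4 ≤ c := by rw [hc]; nlinarith
  have hc0 : 0 < c := lt_of_lt_of_le (by positivity) hcN
  have hcheb := meas_ge_le_variance_div_sq (μ := P) hSmem hc0
  have hsub : {ω | ¬ (N/2 ≤ S ω)} ⊆ {ω | c ≤ |S ω - P[S]|} := by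
    intro ω hω
    simp only [Set.mem_setOf_eq, not_le] at hω ⊢
    rw [hES]
    have h1 : N * θ - S ω > c := by rw [hc]; linarith
    rw [abs_sub_comm]
    calc c ≤ N * θ - S ω := h1.le
      _ ≤ |N * θ - S ω| := le_abs_self _
  calc P {ω | ¬ ((s.card : ℝ)/2 ≤ ∑ i ∈ s, Y i ω)}
      = P {ω | ¬ (N/2 ≤ S ω)} := by
        congr 1
        ext ω
        simp only [Set.mem_setOf_eq, hS, hN, Finset.sum_apply]
    _ ≤ P {ω | c ≤ |S ω - P[S]|} := measure_mono hsub
    _ ≤ ENNReal.ofReal (variance S P / c ^ 2) := hcheb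
    _ ≤ ENNReal.ofReal (1/2) := by
        apply ENNReal.ofReal_le_ofReal
        have hc2 : (N/4)^2 ≤ c^2 := by
          apply sq_le_sq' (by nlinarith) hcN
        have h1 : variance S P / c^2 ≤ (N/4) / (N/4)^2 :=
          div_le_div₀ (by positivity) hVar (by positivity) hc2
        have h2 : (N/4) / (N/4)^2 = 4 / N := by
          field_simp
        rw [h2] at h1
        refine h1.trans ?_
        rw [div_le_div_iff₀ hN0 (by norm_num)]
        linarith

end AuxLemmas

/-- If `1 ≤ p < ∞`, `1 ≤ q < ∞` and `(s-1)p ≥ -1`, then almost surely the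
`b̂^s_{p,q}(𝕋)` norm of the Fourier–Wiener series is infinite:
`Σ_j ( Σ_{|n|∼2^j} ⟨n⟩^{sp} |n|^{-p} |gₙ|^p )^{q/p} = ∞`. -/
theorem brownian_not_in_FourierBesov
    {Ω : Type*} [MeasurableSpace Ω] (P : Measure Ω) [IsProbabilityMeasure P]
    (g : ℤ → Ω → ℂ) (hg : IsStdComplexGaussianFamily P g)
    (p q s : ℝ) (hp : 1 ≤ p) (hq : 1 ≤ q) (hsp : -1 ≤ (s - 1) * p) :
    ∀ᵐ ω ∂P,
      (∑' j : ℕ,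
        ENNReal.ofReal (fbBlock (fun n => ‖g n ω‖) p s j ^ q)) = ⊤ := by
  classical
  obtain ⟨hgind, hgmap⟩ := hg
  set I := ({n : ℤ // n ≠ 0} × Bool) with hI
  set F : I → Ω → ℝ := fun i ω => if i.2 then (g (i.1 : ℤ) ω).re else (g (i.1 : ℤ) ω).im
    with hFdef
  have hgind' : iIndepFun F P := hgind
  have hgmap' : ∀ i : I, P.map (F i) = gaussianReal 0 1 := fun i => hgmap i
  have hAEM : ∀ i : I, AEMeasurable (F i) P := by
    intro i
    refine aemeasurable_of_map_neZero ?_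
    rw [hgmap' i]
    infer_instance
  set F' : I → Ω → ℝ := fun i => (hAEM i).mk (F i) with hF'def
  have hFmeas : ∀ i, Measurable (F' i) := fun i => (hAEM i).measurable_mk
  have hFae : ∀ i, F i =ᵐ[P] F' i := fun i => (hAEM i).ae_eq_mk
  have hind' : iIndepFun F' P :=
    BNB.iIndepFun_congr hgind' hFae
  have hmap' : ∀ i, P.map (F' i) = gaussianReal 0 1 := fun i => by
    rw [← Measure.map_congr (hFae i)]; exact hgmap' i
  -- the threshold
  obtain ⟨t, ht, hθ34, hθ1⟩ := BNB.exists_threshold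
  set B : Set ℝ := {x : ℝ | t ≤ |x|} with hB
  have hBmeas : MeasurableSet B := measurableSet_le measurable_const measurable_abs
  set θ : ℝ := (gaussianReal 0 1 B).toReal with hθ
  set φ : ℝ → ℝ := B.indicator (fun _ => (1:ℝ)) with hφ
  have hφmeas : Measurable φ := measurable_const.indicator hBmeas
  set Y : I → Ω → ℝ := fun i ω => φ (F' i ω) with hY
  have hYind : iIndepFun Y P :=
    hind'.comp (fun _ => φ) (fun _ => hφmeas)
  have hYmem : ∀ i, MemLp (Y i) 2 P := by
    intro i
    have hYeq : Y i = (F' i ⁻¹' B).indicator (fun _ => (1:ℝ)) := by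
      funext ω
      exact (Set.indicator_comp_right (F' i) (g := fun _ => (1:ℝ)) (x := ω)).symm
    rw [hYeq]
    exact memLp_indicator_const 2 (hFmeas i hBmeas) 1 (Or.inr (measure_ne_top _ _))
  have hYsq : ∀ i, Y i ^ 2 = Y i := by
    intro i; funext ω
    simp only [Pi.pow_apply, hY, hφ, Set.indicator_apply]
    by_cases h : F' i ω ∈ B <;> simp [h]
  have hYmean : ∀ i, ∫ ω, Y i ω ∂P = θ := by
    intro i
    have h1 : ∫ x, φ x ∂(P.map (F' i)) = ∫ ω, φ (F' i ω) ∂P :=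
      integral_map (hFmeas i).aemeasurable hφmeas.aestronglyMeasurable
    have h2 : ∫ x, φ x ∂(gaussianReal 0 1) = θ := by
      rw [hφ, integral_indicator_const (1:ℝ) hBmeas, smul_eq_mul, mul_one, hθ, measureReal_def]
    rw [hY, ← h1, hmap' i]
    exact h2
  -- blocks as finsets of the index type
  have hembinj : ∀ j : ℕ, Function.Injective
      (fun m : {x // x ∈ BNB.PB j} => ((⟨(m : ℤ), BNB.PB_ne m.2⟩, true) : I)) := by
    intro j m m' h
    have : (m : ℤ) = (m' : ℤ) := congrArg (fun i : I => (i.1 : ℤ)) h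
    exact Subtype.ext this
  set T : ℕ → Finset I := fun j =>
    (BNB.PB j).attach.map ⟨_, hembinj j⟩ with hT
  have hTmem : ∀ {j : ℕ} {i : I}, i ∈ T j → (i.1 : ℤ) ∈ BNB.PB j := by
    intro j i hi
    rw [hT] at hi
    simp only [Finset.mem_map, Finset.mem_attach, true_and, Function.Embedding.coeFn_mk] at hi
    obtain ⟨m, hm⟩ := hi
    rw [← hm]
    exact m.2
  have hTdisj : Pairwise fun j k => Disjoint (T j) (T k) := by
    intro j k hjk
    rw [Finset.disjoint_left]
    intro i hij hik
    exact Finset.disjoint_left.1 (BNB.PB_disjoint hjk) (hTmem hij) (hTmem hik)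
  have hTcard : ∀ j, (T j).card = BNB.NB j := by
    intro j
    rw [hT]
    simp [BNB.NB]
  -- the events
  set A : ℕ → Set Ω := fun j => {ω | ((BNB.NB j : ℝ))/2 ≤ ∑ i ∈ T j, Y i ω} with hA
  have hsummeas : ∀ j, Measurable (fun ω => ∑ i ∈ T j, Y i ω) := fun j =>
    Finset.measurable_sum (T j) fun i _ => hφmeas.comp (hFmeas i)
  have hAmeas : ∀ j, MeasurableSet (A j) := fun j => (hsummeas j) measurableSet_Ici
  have hAblock : ∀ j, MeasurableSet[⨆ i ∈ ((T j : Set I)),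
      MeasurableSpace.comap (F' i) inferInstance] (A j) := by
    intro j
    have hsum : Measurable[⨆ i ∈ ((T j : Set I)),
        MeasurableSpace.comap (F' i) inferInstance] (fun ω => ∑ i ∈ T j, Y i ω) := by
      apply Finset.measurable_sum
      intro i hi
      have h1 : Measurable[MeasurableSpace.comap (F' i) inferInstance] (Y i) :=
        hφmeas.comp (comap_measurable (F' i))
      exact h1.mono (le_biSup
        (f := fun i => MeasurableSpace.comap (F' i) (inferInstance : MeasurableSpace ℝ))
        (Finset.mem_coe.2 hi)) le_rfl
    exact hsum measurableSet_Ici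
  have hAindep : iIndepSet A P :=
    BNB.iIndepSet_blocks hFmeas hind' T hTdisj A hAblock
  -- probability lower bound
  have hAprob : ∀ j, 4 ≤ j → (1/2 : ENNReal) ≤ P (A j) := by
    intro j hj
    have hpair : Set.Pairwise ↑(T j) fun i k => IndepFun (Y i) (Y k) P :=
      fun i _ k _ hik => hYind.indepFun hik
    have hcardT : (8:ℝ) ≤ ((T j).card : ℝ) := by
      rw [hTcard j]
      exact_mod_cast BNB.NB_ge hj
    have hcheb := BNB.cheb (T j) hYmem hpair hYsq hYmean hθ34 hθ1 hcardT
    have hAC : P ((A j)ᶜ) ≤ ENNReal.ofReal (1/2) := by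
      refine le_trans (le_of_eq ?_) hcheb
      congr 1
      ext ω
      simp only [Set.mem_compl_iff, hA, Set.mem_setOf_eq, hTcard j]
    have hhalf : ENNReal.ofReal (1/2) = (1/2 : ENNReal) := by
      rw [ENNReal.ofReal_div_of_pos (by norm_num)]
      norm_num
    rw [hhalf] at hAC
    have hsum := measure_add_measure_compl (μ := P) (hAmeas j)
    rw [measure_univ] at hsum
    by_contra hcon
    push_neg at hcon
    have hlt : P (A j) + P ((A j)ᶜ) < 1/2 + 1/2 :=
      ENNReal.add_lt_add_of_lt_of_le (by norm_num) hcon hAC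
    rw [hsum, ENNReal.add_halves] at hlt
    exact lt_irrefl _ hlt
  have htsum : (∑' j, P (A j)) = ⊤ := by
    refine BNB.tsum_eq_top (c := (1/2 : ENNReal)) (by norm_num) ?_
    exact (Set.Ici_infinite 4).mono fun j hj => hAprob j hj
  have hBC : P (limsup A atTop) = 1 := measure_limsup_eq_one hAmeas hAindep htsum
  have hae1 : ∀ᵐ ω ∂P, ω ∈ limsup A atTop := by
    rw [ae_iff]
    have hset : {ω | ¬ ω ∈ limsup A atTop} = (limsup A atTop)ᶜ := rfl
    rw [hset, prob_compl_eq_one_sub (MeasurableSet.measurableSet_limsup hAmeas), hBC]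
    simp
  have hae2 : ∀ᵐ ω ∂P, ∀ i : I, F i ω = F' i ω := ae_all_iff.2 hFae
  have hδpos : (0:ℝ) < min 1 ((2:ℝ) ^ (s * p / 2)) * t ^ p / 4 := by
    have h1 : (0:ℝ) < min 1 ((2:ℝ) ^ (s * p / 2)) :=
      lt_min one_pos (Real.rpow_pos_of_pos two_pos _)
    have h2 : (0:ℝ) < t ^ p := Real.rpow_pos_of_pos ht p
    positivity
  have hεpos : (0:ℝ) <
      ((min 1 ((2:ℝ) ^ (s * p / 2)) * t ^ p / 4) ^ (1/p)) ^ q :=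
    Real.rpow_pos_of_pos (Real.rpow_pos_of_pos hδpos _) _
  filter_upwards [hae1, hae2] with ω hlim hgood
  have hinf : {j : ℕ | ω ∈ A j}.Infinite := by
    rw [Filter.mem_limsup_iff_frequently_mem] at hlim
    exact Nat.frequently_atTop_iff_infinite.1 hlim
  refine BNB.tsum_eq_top
    (c := ENNReal.ofReal (((min 1 ((2:ℝ) ^ (s * p / 2)) * t ^ p / 4) ^ (1/p)) ^ q))
    (ENNReal.ofReal_pos.2 hεpos).ne' ?_
  refine hinf.mono ?_
  intro j hj
  have hconv : ∑ i ∈ T j, Y i ω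
      = ∑ n ∈ BNB.PB j, (if t ≤ |(g n ω).re| then (1:ℝ) else 0) := by
    rw [hT, Finset.sum_map]
    rw [← Finset.sum_attach (BNB.PB j) (fun n => if t ≤ |(g n ω).re| then (1:ℝ) else 0)]
    refine Finset.sum_congr rfl ?_
    intro m _
    have hgm := hgood ((⟨(m : ℤ), BNB.PB_ne m.2⟩, true) : I)
    simp only [Function.Embedding.coeFn_mk, hY]
    rw [← hgm]
    simp [hφ, hFdef, hB, Set.indicator_apply]
  have hjA : ω ∈ A j := hj
  rw [hA] at hjA
  have hcount : ((BNB.NB j : ℝ))/2 ≤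
      ∑ n ∈ BNB.PB j, (if t ≤ |(g n ω).re| then (1:ℝ) else 0) := by
    rw [← hconv]
    exact hjA
  have hlow := BNB.sum_lower hp hsp ht j (fun n => ‖g n ω‖)
    (fun n => (g n ω).re) (fun n => norm_nonneg _)
    (fun n => Complex.abs_re_le_norm _) hcount
  have hfb : (min 1 ((2:ℝ) ^ (s * p / 2)) * t ^ p / 4) ^ (1/p)
      ≤ fbBlock (fun n => ‖g n ω‖) p s j := by
    unfold fbBlock
    exact Real.rpow_le_rpow hδpos.le hlow (by positivity)
  have hfbq : ((min 1 ((2:ℝ) ^ (s * p / 2)) * t ^ p / 4) ^ (1/p)) ^ q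
      ≤ fbBlock (fun n => ‖g n ω‖) p s j ^ q :=
    Real.rpow_le_rpow (Real.rpow_nonneg hδpos.le _) hfb (by positivity)
  exact ENNReal.ofReal_le_ofReal hfbq
end
end

section
/- Let 1 ≤ p < ∞, 1 ≤ q ≤ ∞ and s ∈ ℝ with (s−1)p < −1. Then there exist constants c > 0 and K₀ > 0 such that for all K ≥ K₀, P( ‖ ( Σ_{|n|∼2^j} ⟨n⟩^{sp} |n|^{−p} |g_n|^p )^{1/p} ‖_{ℓ^q_j} > K ) ≤ e^{−cK²}; that is, the b̂^s_{p,q}(𝕋) norm of the Fourier–Wiener series u obeys a Gaussian large deviation estimate. -/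
open MeasureTheory ProbabilityTheory Filter

noncomputable section

open scoped ENNReal NNReal

open Real in
lemma gauss_tail {u : ℝ} (hu : 0 ≤ u) :
    gaussianReal 0 1 {x : ℝ | u < |x|} ≤ ENNReal.ofReal (2 * Real.exp (-u^2/4)) := by
  rw [gaussianReal_apply 0 one_ne_zero]
  have hc : (0:ℝ) < (√(2*π))⁻¹ := by positivity
  set G : ℝ → ℝ := fun x => (√(2*π))⁻¹ * (Real.exp (-u^2/4) * Real.exp (-(1/4) * x^2)) with hG
  have hGmeas : Measurable fun x => ENNReal.ofReal (G x) := by fun_prop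
  have hpt : ∀ x ∈ {x : ℝ | u < |x|}, gaussianPDF 0 1 x ≤ ENNReal.ofReal (G x) := by
    intro x hx
    have hux : u ≤ |x| := le_of_lt hx
    have hx2 : u^2 ≤ x^2 := by
      calc u^2 ≤ |x|^2 := by apply pow_le_pow_left₀ hu hux
        _ = x^2 := sq_abs x
    rw [gaussianPDF]
    apply ENNReal.ofReal_le_ofReal
    rw [hG]
    simp only [gaussianPDFReal, NNReal.coe_one, mul_one, sub_zero]
    apply mul_le_mul_of_nonneg_left _ (le_of_lt hc)
    rw [← Real.exp_add]
    apply Real.exp_le_exp.mpr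
    nlinarith
  have hs : (0:ℝ) < √(2*π) := Real.sqrt_pos.mpr (by positivity)
  calc ∫⁻ x in {x : ℝ | u < |x|}, gaussianPDF 0 1 x
      ≤ ∫⁻ x in {x : ℝ | u < |x|}, ENNReal.ofReal (G x) := setLIntegral_mono hGmeas hpt
    _ ≤ ∫⁻ x, ENNReal.ofReal (G x) := setLIntegral_le_lintegral _ _
    _ = ENNReal.ofReal (∫ x, G x) := by
        rw [← ofReal_integral_eq_lintegral_ofReal]
        · exact ((integrable_exp_neg_mul_sq (by norm_num : (0:ℝ) < 1/4)).const_mul _).const_mul _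
        · exact ae_of_all _ fun x => by positivity
    _ ≤ ENNReal.ofReal (2 * Real.exp (-u^2/4)) := by
        apply ENNReal.ofReal_le_ofReal
        rw [hG]
        simp only []
        rw [integral_const_mul, integral_const_mul, integral_gaussian]
        have h1 : √(π/(1/4)) ≤ 2 * √(2*π) := by
          rw [show π/(1/4) = 4*π by ring]
          calc √(4*π) ≤ √(4*(2*π)) := Real.sqrt_le_sqrt (by nlinarith [pi_pos])
            _ = √4 * √(2*π) := Real.sqrt_mul (by norm_num) _
            _ = 2 * √(2*π) := by
                rw [show (4:ℝ) = 2^2 by norm_num, Real.sqrt_sq (by norm_num : (0:ℝ) ≤ 2)]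
    
        calc (√(2*π))⁻¹ * (Real.exp (-u^2/4) * √(π/(1/4)))
            ≤ (√(2*π))⁻¹ * (Real.exp (-u^2/4) * (2 * √(2*π))) := by
              apply mul_le_mul_of_nonneg_left _ hc.le
              exact mul_le_mul_of_nonneg_left h1 (Real.exp_nonneg _)
          _ = 2 * Real.exp (-u^2/4) := by field_simp

lemma tail_map {Ω : Type*} [MeasurableSpace Ω] (P : Measure Ω) [IsProbabilityMeasure P]
    {X : Ω → ℝ} (hX : P.map X = gaussianReal 0 1) {u : ℝ} (hu : 0 ≤ u) :
    P {ω | u < |X ω|} ≤ ENNReal.ofReal (2 * Real.exp (-u^2/4)) := by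
  have hae : AEMeasurable X P := by
    by_contra h
    rw [Measure.map_of_not_aemeasurable h] at hX
    have := congrArg (fun μ : Measure ℝ => μ Set.univ) hX
    simp at this
  have hsm : MeasurableSet {x : ℝ | u < |x|} :=
    measurableSet_lt measurable_const measurable_abs
  have hmap := Measure.map_apply_of_aemeasurable hae hsm
  calc P {ω | u < |X ω|} = P.map X {x : ℝ | u < |x|} := by rw [hmap]; rfl
    _ ≤ ENNReal.ofReal (2 * Real.exp (-u^2/4)) := by rw [hX]; exact gauss_tail hu

lemma complex_tail {Ω : Type*} [MeasurableSpace Ω] (P : Measure Ω) [IsProbabilityMeasure P]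
    {Z : Ω → ℂ}
    (hre : P.map (fun ω => (Z ω).re) = gaussianReal 0 1)
    (him : P.map (fun ω => (Z ω).im) = gaussianReal 0 1)
    {t : ℝ} (ht : 0 ≤ t) :
    P {ω | t < ‖Z ω‖} ≤ ENNReal.ofReal (4 * Real.exp (-t^2/16)) := by
  have hsub : {ω | t < ‖Z ω‖} ⊆
      {ω | t/2 < |(Z ω).re|} ∪ {ω | t/2 < |(Z ω).im|} := by
    intro ω hω
    by_contra h
    simp only [Set.mem_union, Set.mem_setOf_eq, not_or, not_lt] at h
    have := Complex.norm_le_abs_re_add_abs_im (Z ω)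
    have hω' : t < ‖Z ω‖ := hω
    linarith [h.1, h.2]
  have h2 : ((t/2)^2 : ℝ)/4 = t^2/16 := by ring
  calc P {ω | t < ‖Z ω‖}
      ≤ P ({ω | t/2 < |(Z ω).re|} ∪ {ω | t/2 < |(Z ω).im|}) := measure_mono hsub
    _ ≤ P {ω | t/2 < |(Z ω).re|} + P {ω | t/2 < |(Z ω).im|} := measure_union_le _ _
    _ ≤ ENNReal.ofReal (2 * Real.exp (-(t/2)^2/4)) + ENNReal.ofReal (2 * Real.exp (-(t/2)^2/4)) :=
        add_le_add (tail_map P hre (by positivity)) (tail_map P him (by positivity))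
    _ = ENNReal.ofReal (4 * Real.exp (-t^2/16)) := by
        rw [← ENNReal.ofReal_add (by positivity) (by positivity)]
        congr 1
        rw [show -(t/2)^2/4 = -t^2/16 by ring]
        ring

open Real in
lemma exp_summable {e : ℝ} (he : 0 < e) :
    Summable (fun n : {n : ℤ // n ≠ 0} => Real.exp (-(((n : ℤ) : ℝ)^2)^e / 32)) := by
  have htend : Tendsto (fun x : ℝ => x * Real.exp (-x^e / 32)) atTop (nhds 0) := by
    have h1 : Tendsto (fun y : ℝ => y ^ (1/e) * Real.exp (-(1/32) * y)) atTop (nhds 0) :=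
      tendsto_rpow_mul_exp_neg_mul_atTop_nhds_zero _ _ (by norm_num)
    have h2 := h1.comp (tendsto_rpow_atTop he)
    apply h2.congr'
    filter_upwards [eventually_gt_atTop (0:ℝ)] with x hx
    simp only [Function.comp_apply]
    rw [← Real.rpow_mul hx.le, mul_one_div_cancel he.ne', Real.rpow_one]
    congr 1
    ring
  have hev : ∀ᶠ x in atTop, x * Real.exp (-x^e / 32) ≤ 1 := by
    filter_upwards [htend.eventually (eventually_le_nhds (by norm_num : (0:ℝ) < 1))] with x hx
    exact hx
  obtain ⟨N, hN⟩ := hev.exists_forall_of_atTop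
  set C : ℝ := max N 1 with hC
  have hC1 : (1:ℝ) ≤ C := le_max_right _ _
  have hbound : ∀ x : ℝ, 1 ≤ x → Real.exp (-x^e / 32) ≤ C / x := by
    intro x hx1
    have hx0 : (0:ℝ) < x := lt_of_lt_of_le one_pos hx1
    rcases le_or_gt N x with h | h
    · have := hN x h
      rw [le_div_iff₀ hx0]
      calc Real.exp (-x^e/32) * x = x * Real.exp (-x^e/32) := by ring
        _ ≤ 1 := this
        _ ≤ C := hC1
    · have hexp : Real.exp (-x^e/32) ≤ 1 := by
        rw [← Real.exp_zero]
        apply Real.exp_le_exp.mpr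
        have hxe : 0 ≤ x^e := Real.rpow_nonneg hx0.le e
        linarith
      calc Real.exp (-x^e/32) ≤ 1 := hexp
        _ ≤ C / x := by
            rw [le_div_iff₀ hx0]
            calc 1 * x = x := one_mul x
              _ ≤ N := h.le
              _ ≤ C := le_max_left _ _
  have hmaj : Summable (fun n : {n : ℤ // n ≠ 0} => C * (1 / ((n:ℤ):ℝ)^2)) := by
    have hs : Summable (fun n : ℤ => 1 / (n:ℝ)^2) := summable_one_div_int_pow.mpr one_lt_two
    exact (hs.comp_injective Subtype.val_injective).mul_left C
  apply Summable.of_nonneg_of_le (fun n => Real.exp_nonneg _) _ hmaj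
  intro n
  have hn1 : (1:ℝ) ≤ ((n:ℤ):ℝ)^2 := by
    have : (1:ℤ) ≤ (n:ℤ)^2 := by
      rcases lt_or_gt_of_ne n.2 with h | h
      · nlinarith
      · nlinarith
    exact_mod_cast this
  have := hbound _ hn1
  calc Real.exp (-(((n:ℤ):ℝ)^2)^e / 32) ≤ C / ((n:ℤ):ℝ)^2 := this
    _ = C * (1 / ((n:ℤ):ℝ)^2) := by ring

-- membership facts
lemma dyadic_mem {j : ℕ} {n : ℤ} (hn : n ∈ dyadicBlock j) :
    n ≠ 0 ∧ (2:ℝ) ^ ((j:ℝ) - 1) < |(n:ℝ)| ∧ |(n:ℝ)| ≤ (2:ℝ) ^ (j:ℝ) := by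
  rw [dyadicBlock, Finset.mem_filter] at hn
  obtain ⟨-, h1, h2⟩ := hn
  have hj : (0:ℤ) < 2 ^ j := by positivity
  have hn0 : n ≠ 0 := by
    rintro rfl
    simp at h1
    omega
  have hc1 : ((2:ℝ)) ^ (j:ℕ) < 2 * |(n:ℝ)| := by
    have := h1
    calc ((2:ℝ)) ^ (j:ℕ) = (((2:ℤ)^j : ℤ) : ℝ) := by push_cast; ring
      _ < ((2 * |n| : ℤ) : ℝ) := by exact_mod_cast this
      _ = 2 * |(n:ℝ)| := by push_cast; ring
  have hc2 : |(n:ℝ)| ≤ ((2:ℝ)) ^ (j:ℕ) := by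
    calc |(n:ℝ)| = ((|n| : ℤ) : ℝ) := by push_cast; ring
      _ ≤ (((2:ℤ)^j : ℤ) : ℝ) := by exact_mod_cast h2
      _ = ((2:ℝ)) ^ (j:ℕ) := by push_cast; ring
  have hrw : ((2:ℝ)) ^ (j:ℕ) = (2:ℝ) ^ (j:ℝ) := (Real.rpow_natCast 2 j).symm
  refine ⟨hn0, ?_, ?_⟩
  · rw [Real.rpow_sub two_pos, Real.rpow_one]
    rw [hrw] at hc1
    linarith
  · rw [← hrw]; exact hc2

lemma dyadic_card {j : ℕ} : ((dyadicBlock j).card : ℝ) ≤ 3 * (2:ℝ) ^ (j:ℝ) := by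
  have h1 : (dyadicBlock j).card ≤ (Finset.Icc (-(2 ^ j : ℤ)) (2 ^ j)).card :=
    Finset.card_filter_le _ _
  have h2 : (Finset.Icc (-(2 ^ j : ℤ)) (2 ^ j)).card = (2 ^ j + 1 - -(2^j)).toNat := Int.card_Icc _ _
  have h3 : ((2:ℤ) ^ j + 1 - -(2^j)).toNat = 2 * 2^j + 1 := by
    have h0 : (0:ℤ) < 2^j := by positivity
    have e : ((2:ℤ)^j) = ((2^j : ℕ) : ℤ) := by push_cast; ring
    omega
  have h4 : ((dyadicBlock j).card : ℝ) ≤ ((2 * 2^j + 1 : ℕ) : ℝ) := by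
    exact_mod_cast h1.trans (le_of_eq (h2.trans h3))
  have h5 : ((2 * 2^j + 1 : ℕ) : ℝ) ≤ 3 * (2:ℝ)^(j:ℕ) := by
    push_cast
    have : (1:ℝ) ≤ 2^(j:ℕ) := one_le_pow₀ (by norm_num)
    linarith
  calc ((dyadicBlock j).card : ℝ) ≤ 3 * (2:ℝ)^(j:ℕ) := h4.trans h5
    _ = 3 * (2:ℝ)^(j:ℝ) := by rw [Real.rpow_natCast]

lemma lq_le_l1 (x : ℕ → ℝ≥0∞) {r : ℝ} (hr : 1 ≤ r) :
    (∑' j, x j ^ r) ^ (1/r) ≤ ∑' j, x j := by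
  set T := ∑' j, x j with hT
  have h0 : (0:ℝ) < r := lt_of_lt_of_le one_pos hr
  have hre : (1:ℝ) + (r - 1) = r := by ring
  rcases eq_top_or_lt_top T with hTt | hTt
  · rw [hTt]; exact le_top
  rcases eq_or_ne T 0 with hT0 | hT0
  · have hx0 : ∀ j, x j = 0 := fun j =>
      le_antisymm ((ENNReal.le_tsum j).trans hT0.le) (by simp)
    simp only [hx0, ENNReal.zero_rpow_of_pos h0, tsum_zero, hT0]
    rw [ENNReal.zero_rpow_of_pos (by positivity)]
  have key : ∑' j, x j ^ r ≤ T ^ r := by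
    have h1 : ∀ j, x j ^ r ≤ x j * T ^ (r - 1) := by
      intro j
      rcases eq_or_ne (x j) 0 with h | h
      · simp [h, ENNReal.zero_rpow_of_pos h0]
      · have hxT : x j ≤ T := ENNReal.le_tsum j
        have h2 : x j ^ r = x j * x j ^ (r - 1) := by
          rw [← hre, ENNReal.rpow_add _ _ h (hxT.trans_lt hTt).ne, ENNReal.rpow_one]; norm_num
        rw [h2]
        exact mul_le_mul_right (ENNReal.rpow_le_rpow hxT (by linarith)) _
    calc ∑' j, x j ^ r ≤ ∑' j, x j * T ^ (r - 1) := ENNReal.tsum_le_tsum h1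
      _ = T * T ^ (r - 1) := by rw [ENNReal.tsum_mul_right]
      _ = T ^ r := by
          rw [← hre, ENNReal.rpow_add _ _ hT0 hTt.ne, ENNReal.rpow_one]; norm_num
  calc (∑' j, x j ^ r) ^ (1/r) ≤ (T ^ r) ^ (1/r) := ENNReal.rpow_le_rpow key (by positivity)
    _ = T := by rw [← ENNReal.rpow_mul, mul_one_div_cancel h0.ne', ENNReal.rpow_one]

lemma one_le_rpow2 {y : ℝ} (hy : 0 ≤ y) : (1:ℝ) ≤ (2:ℝ) ^ y := by
  calc (1:ℝ) = (2:ℝ) ^ (0:ℝ) := (Real.rpow_zero 2).symm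
    _ ≤ (2:ℝ) ^ y := Real.rpow_le_rpow_of_exponent_le one_le_two hy


open Real in
lemma fb_det (p s ε : ℝ) (hp : 1 ≤ p) (hε : 0 < ε) (hδ : (s + ε - 1) * p + 1 < 0) :
    ∃ C > (0:ℝ), ∀ (q : ℝ≥0∞), 1 ≤ q → ∀ (a : ℤ → ℝ) (M : ℝ), 0 ≤ M →
      (∀ n : ℤ, n ≠ 0 → 0 ≤ a n) →
      (∀ n : ℤ, n ≠ 0 → a n ≤ M * (1 + (n:ℝ)^2) ^ (ε/2)) →
      fbNorm a p s q ≤ ENNReal.ofReal (C * M) := by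
  have hp0 : (0:ℝ) < p := lt_of_lt_of_le one_pos hp
  set t : ℝ := (s + ε) * p / 2 with ht
  set θ : ℝ := 2 * t - p + 1 with hθdef
  have hθ : θ < 0 := by rw [hθdef, ht]; nlinarith
  set B : ℝ := (2:ℝ) ^ t + (2:ℝ) ^ (-2*t) with hB
  have hBpos : 0 < B := by positivity
  set K₁ : ℝ := 3 * B * (2:ℝ) ^ p with hK₁
  have hK₁pos : 0 < K₁ := by positivity
  set r : ℝ := (2:ℝ) ^ (θ / p) with hr
  have hr0 : 0 < r := Real.rpow_pos_of_pos two_pos _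
  have hr1 : r < 1 :=
    Real.rpow_lt_one_of_one_lt_of_neg one_lt_two (div_neg_of_neg_of_pos hθ hp0)
  refine ⟨K₁ ^ (1/p) * (1 - r)⁻¹, mul_pos (Real.rpow_pos_of_pos hK₁pos _) (inv_pos.mpr (by linarith)), ?_⟩
  intro q hq a M hM ha hab
  -- Step A: per-block weighted sum bound
  have hblocksum : ∀ j : ℕ, ∑ n ∈ dyadicBlock j,
      (1 + (n : ℝ) ^ 2) ^ (s * p / 2) * |(n : ℝ)| ^ (-p) * a n ^ p
      ≤ M ^ p * (K₁ * (2:ℝ) ^ ((j:ℝ) * θ)) := by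
    intro j
    set D : ℝ := M ^ p * (B * (2:ℝ)^p * (2:ℝ) ^ ((j:ℝ) * (2*t - p))) with hD
    have hterm : ∀ n ∈ dyadicBlock j,
        (1 + (n : ℝ) ^ 2) ^ (s * p / 2) * |(n : ℝ)| ^ (-p) * a n ^ p ≤ D := by
      intro n hn
      obtain ⟨hn0, hxl, hxu⟩ := dyadic_mem hn
      have hx0 : (0:ℝ) < |(n:ℝ)| := lt_trans (Real.rpow_pos_of_pos two_pos _) hxl
      have h1n : (0:ℝ) < 1 + (n:ℝ)^2 := by positivity
      have hap : a n ^ p ≤ M ^ p * (1 + (n:ℝ)^2) ^ (ε * p / 2) := by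
        have h1 : a n ^ p ≤ (M * (1 + (n:ℝ)^2) ^ (ε/2)) ^ p :=
          Real.rpow_le_rpow (ha n hn0) (hab n hn0) hp0.le
        have h2 : (M * (1 + (n:ℝ)^2) ^ (ε/2)) ^ p
            = M ^ p * ((1 + (n:ℝ)^2) ^ (ε/2)) ^ p :=
          Real.mul_rpow hM (Real.rpow_nonneg h1n.le _)
        have h3 : ((1 + (n:ℝ)^2) ^ (ε/2)) ^ p = (1 + (n:ℝ)^2) ^ (ε * p / 2) := by
          rw [← Real.rpow_mul h1n.le]
          ring_nf
        rw [h2, h3] at h1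
        exact h1
      have hmerge : (1 + (n:ℝ)^2) ^ (s * p / 2) * (1 + (n:ℝ)^2) ^ (ε * p / 2)
          = (1 + (n:ℝ)^2) ^ t := by
        rw [← Real.rpow_add h1n]
        congr 1
        rw [ht]; ring
      -- bound (1+n²)^t ≤ B * 2^(2jt)
      have hup : 1 + (n:ℝ)^2 ≤ (2:ℝ) ^ (2*(j:ℝ) + 1) := by
        have h1 : (1:ℝ) ≤ (2:ℝ) ^ (2*(j:ℝ)) :=
          one_le_rpow2 (mul_nonneg (by norm_num) (Nat.cast_nonneg j))
        have h2b : ((2:ℝ)^(j:ℝ))^2 = (2:ℝ)^(2*(j:ℝ)) := by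
          rw [← Real.rpow_natCast ((2:ℝ)^(j:ℝ)) 2, ← Real.rpow_mul (by norm_num : (0:ℝ) ≤ 2)]
          congr 1
          push_cast
          ring
        have h2 : (n:ℝ)^2 ≤ (2:ℝ) ^ (2*(j:ℝ)) := by
          have h2a : |(n:ℝ)|^2 ≤ ((2:ℝ)^(j:ℝ))^2 := pow_le_pow_left₀ (abs_nonneg _) hxu 2
          rw [← sq_abs]
          rw [← h2b]
          exact h2a
        have h3 : (2:ℝ) ^ (2*(j:ℝ) + 1) = (2:ℝ)^(2*(j:ℝ)) + (2:ℝ)^(2*(j:ℝ)) := by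
          rw [Real.rpow_add two_pos, Real.rpow_one]
          ring
        have h4 : (n:ℝ)^2 = |(n:ℝ)|^2 := (sq_abs _).symm
        rw [h4, h3]
        have h5 : |(n:ℝ)|^2 ≤ (2:ℝ)^(2*(j:ℝ)) := by
          rw [← sq_abs] at h2
          exact h2
        linarith
      have hlow : (2:ℝ) ^ (2*(j:ℝ) - 2) ≤ 1 + (n:ℝ)^2 := by
        have h1 : (2:ℝ) ^ ((j:ℝ) - 1) ≤ |(n:ℝ)| := hxl.le
        have h2 : ((2:ℝ) ^ ((j:ℝ) - 1))^2 ≤ |(n:ℝ)|^2 := by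
          apply pow_le_pow_left₀ (by positivity) h1
        have h3 : ((2:ℝ) ^ ((j:ℝ) - 1))^2 = (2:ℝ) ^ (2*(j:ℝ) - 2) := by
          rw [← Real.rpow_natCast ((2:ℝ) ^ ((j:ℝ) - 1)) 2, ← Real.rpow_mul (by norm_num : (0:ℝ) ≤ 2)]
          congr 1
          push_cast
          ring
        rw [h3] at h2
        rw [sq_abs] at h2
        linarith
      have hAt : (1 + (n:ℝ)^2) ^ t ≤ B * (2:ℝ) ^ (2*(j:ℝ)*t) := by
        rcases le_or_gt 0 t with htp | htn
        · have h1 : (1 + (n:ℝ)^2) ^ t ≤ ((2:ℝ) ^ (2*(j:ℝ) + 1)) ^ t :=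
            Real.rpow_le_rpow h1n.le hup htp
          have h2 : ((2:ℝ) ^ (2*(j:ℝ) + 1)) ^ t = (2:ℝ)^t * (2:ℝ) ^ (2*(j:ℝ)*t) := by
            rw [← Real.rpow_mul (by norm_num : (0:ℝ) ≤ 2), ← Real.rpow_add two_pos]
            congr 1
            ring
          have h4 : (0:ℝ) ≤ (2:ℝ) ^ (-2*t) * (2:ℝ) ^ (2*(j:ℝ)*t) := by positivity
          rw [h2] at h1
          rw [hB]
          nlinarith
        · have h1 : (1 + (n:ℝ)^2) ^ t ≤ ((2:ℝ) ^ (2*(j:ℝ) - 2)) ^ t :=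
            Real.rpow_le_rpow_of_nonpos (Real.rpow_pos_of_pos two_pos _) hlow htn.le
          have h2 : ((2:ℝ) ^ (2*(j:ℝ) - 2)) ^ t = (2:ℝ)^(-2*t) * (2:ℝ) ^ (2*(j:ℝ)*t) := by
            rw [← Real.rpow_mul (by norm_num : (0:ℝ) ≤ 2), ← Real.rpow_add two_pos]
            congr 1
            ring
          have h4 : (0:ℝ) ≤ (2:ℝ) ^ t * (2:ℝ) ^ (2*(j:ℝ)*t) := by positivity
          rw [h2] at h1
          rw [hB]
          nlinarith
      have hxp : |(n:ℝ)| ^ (-p) ≤ (2:ℝ)^p * (2:ℝ) ^ (-(j:ℝ)*p) := by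
        have h1 : |(n:ℝ)| ^ (-p) ≤ ((2:ℝ) ^ ((j:ℝ) - 1)) ^ (-p) :=
          Real.rpow_le_rpow_of_nonpos (Real.rpow_pos_of_pos two_pos _) hxl.le
            (neg_nonpos.mpr hp0.le)
        have h2 : ((2:ℝ) ^ ((j:ℝ) - 1)) ^ (-p) = (2:ℝ)^p * (2:ℝ) ^ (-(j:ℝ)*p) := by
          rw [← Real.rpow_mul (by norm_num : (0:ℝ) ≤ 2), ← Real.rpow_add two_pos]
          congr 1
          ring
        rw [h2] at h1
        exact h1
      -- combine
      calc (1 + (n : ℝ) ^ 2) ^ (s * p / 2) * |(n : ℝ)| ^ (-p) * a n ^ p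
          ≤ (1 + (n : ℝ) ^ 2) ^ (s * p / 2) * |(n : ℝ)| ^ (-p)
              * (M ^ p * (1 + (n:ℝ)^2) ^ (ε * p / 2)) := by
            apply mul_le_mul_of_nonneg_left hap
            positivity
        _ = M ^ p * ((1 + (n:ℝ)^2) ^ t * |(n : ℝ)| ^ (-p)) := by
            rw [← hmerge]; ring
        _ ≤ M ^ p * ((B * (2:ℝ) ^ (2*(j:ℝ)*t)) * ((2:ℝ)^p * (2:ℝ) ^ (-(j:ℝ)*p))) := by
            apply mul_le_mul_of_nonneg_left _ (Real.rpow_nonneg hM p)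
            apply mul_le_mul hAt hxp (Real.rpow_nonneg (abs_nonneg _) _) (by positivity)
        _ = D := by
            rw [hD]
            have : (2:ℝ) ^ (2*(j:ℝ)*t) * (2:ℝ) ^ (-(j:ℝ)*p) = (2:ℝ) ^ ((j:ℝ) * (2*t - p)) := by
              rw [← Real.rpow_add two_pos]
              congr 1
              ring
            calc M ^ p * (B * (2:ℝ) ^ (2*(j:ℝ)*t) * ((2:ℝ)^p * (2:ℝ) ^ (-(j:ℝ)*p)))
                = M ^ p * (B * (2:ℝ)^p * ((2:ℝ) ^ (2*(j:ℝ)*t) * (2:ℝ) ^ (-(j:ℝ)*p))) := by ring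
              _ = M ^ p * (B * (2:ℝ)^p * (2:ℝ) ^ ((j:ℝ) * (2*t - p))) := by rw [this]
    have hsum : ∑ n ∈ dyadicBlock j,
        (1 + (n : ℝ) ^ 2) ^ (s * p / 2) * |(n : ℝ)| ^ (-p) * a n ^ p
        ≤ ((dyadicBlock j).card : ℝ) * D := by
      have := Finset.sum_le_card_nsmul (dyadicBlock j) _ D hterm
      simpa [nsmul_eq_mul] using this
    have hD0 : 0 ≤ D := by
      rw [hD]
      have : (0:ℝ) ≤ M ^ p := Real.rpow_nonneg hM p
      positivity
    calc ∑ n ∈ dyadicBlock j,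
        (1 + (n : ℝ) ^ 2) ^ (s * p / 2) * |(n : ℝ)| ^ (-p) * a n ^ p
        ≤ ((dyadicBlock j).card : ℝ) * D := hsum
      _ ≤ 3 * (2:ℝ) ^ (j:ℝ) * D := mul_le_mul_of_nonneg_right dyadic_card hD0
      _ = M ^ p * (K₁ * (2:ℝ) ^ ((j:ℝ) * θ)) := by
          rw [hD, hK₁, hθdef]
          have : (2:ℝ) ^ (j:ℝ) * (2:ℝ) ^ ((j:ℝ) * (2*t - p)) = (2:ℝ) ^ ((j:ℝ) * (2*t - p + 1)) := by
            rw [← Real.rpow_add two_pos]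
            congr 1
            ring
          calc 3 * (2:ℝ) ^ (j:ℝ) * (M ^ p * (B * (2:ℝ)^p * (2:ℝ) ^ ((j:ℝ) * (2*t - p))))
              = M ^ p * (3 * B * (2:ℝ)^p * ((2:ℝ) ^ (j:ℝ) * (2:ℝ) ^ ((j:ℝ) * (2*t - p)))) := by ring
            _ = M ^ p * (3 * B * (2:ℝ)^p * (2:ℝ) ^ ((j:ℝ) * (2*t - p + 1))) := by rw [this]
  -- Step B: block norm bound
  have hblock : ∀ j : ℕ, fbBlock a p s j ≤ M * K₁ ^ (1/p) * r ^ j := by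
    intro j
    have hS0 : 0 ≤ ∑ n ∈ dyadicBlock j,
        (1 + (n : ℝ) ^ 2) ^ (s * p / 2) * |(n : ℝ)| ^ (-p) * a n ^ p := by
      apply Finset.sum_nonneg
      intro n hn
      obtain ⟨hn0, -, -⟩ := dyadic_mem hn
      have := ha n hn0
      have h1 : (0:ℝ) ≤ a n ^ p := Real.rpow_nonneg this p
      positivity
    have h1 : fbBlock a p s j ≤ (M ^ p * (K₁ * (2:ℝ) ^ ((j:ℝ) * θ))) ^ (1/p) := by
      rw [fbBlock]
      exact Real.rpow_le_rpow hS0 (hblocksum j) (by positivity)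
    have h2 : (M ^ p * (K₁ * (2:ℝ) ^ ((j:ℝ) * θ))) ^ (1/p) = M * K₁ ^ (1/p) * r ^ j := by
      rw [Real.mul_rpow (Real.rpow_nonneg hM p) (by positivity),
          Real.mul_rpow hK₁pos.le (by positivity)]
      have e1 : (M ^ p) ^ (1/p) = M := by
        rw [← Real.rpow_mul hM, mul_one_div_cancel hp0.ne', Real.rpow_one]
      have e2 : ((2:ℝ) ^ ((j:ℝ) * θ)) ^ (1/p) = r ^ j := by
        rw [← Real.rpow_mul (by norm_num : (0:ℝ) ≤ 2)]
        rw [← Real.rpow_natCast r j, hr, ← Real.rpow_mul (by norm_num : (0:ℝ) ≤ 2)]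
        congr 1
        field_simp
      rw [e1, e2]
      ring
    exact h1.trans (le_of_eq h2)
  -- Step C: sum the geometric series in ℝ≥0∞
  have hgeom : Summable (fun j : ℕ => M * K₁ ^ (1/p) * r ^ j) :=
    (summable_geometric_of_lt_one hr0.le hr1).mul_left _
  have htsum_le : (∑' j : ℕ, ENNReal.ofReal (fbBlock a p s j))
      ≤ ENNReal.ofReal (K₁ ^ (1/p) * (1 - r)⁻¹ * M) := by
    calc (∑' j : ℕ, ENNReal.ofReal (fbBlock a p s j))
        ≤ ∑' j : ℕ, ENNReal.ofReal (M * K₁ ^ (1/p) * r ^ j) :=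
          ENNReal.tsum_le_tsum fun j => ENNReal.ofReal_le_ofReal (hblock j)
      _ = ENNReal.ofReal (∑' j : ℕ, M * K₁ ^ (1/p) * r ^ j) :=
          (ENNReal.ofReal_tsum_of_nonneg (fun j => by positivity) hgeom).symm
      _ = ENNReal.ofReal (K₁ ^ (1/p) * (1 - r)⁻¹ * M) := by
          congr 1
          rw [tsum_mul_left, tsum_geometric_of_lt_one hr0.le hr1]
          ring
  -- Step D: conclude for each q
  rw [fbNorm]
  rcases eq_or_ne q ⊤ with hqt | hqt
  · rw [if_pos hqt]
    apply iSup_le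
    intro j
    exact (ENNReal.le_tsum j).trans htsum_le
  · rw [if_neg hqt]
    have hq1 : (1:ℝ) ≤ q.toReal := by
      have := ENNReal.toReal_mono hqt hq
      simpa using this
    exact (lq_le_l1 _ hq1).trans htsum_le


/-- Large deviation estimate for the `b̂^s_{p,q}(𝕋)` norm of the Fourier–Wiener series:
if `1 ≤ p < ∞`, `1 ≤ q ≤ ∞` and `(s-1)p < -1`, then there are `c > 0` and `K₀ > 0` with
`P( ‖u‖_{b̂^s_{p,q}} > K ) ≤ e^{-cK²}` for all `K ≥ K₀`. -/

theorem brownian_FourierBesov_largeDeviation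
    {Ω : Type*} [MeasurableSpace Ω] (P : Measure Ω) [IsProbabilityMeasure P]
    (g : ℤ → Ω → ℂ) (hg : IsStdComplexGaussianFamily P g)
    (p s : ℝ) (q : ENNReal) (hp : 1 ≤ p) (hq : 1 ≤ q) (hsp : (s - 1) * p < -1) :
    ∃ c > (0 : ℝ), ∃ K₀ > (0 : ℝ), ∀ K ≥ K₀,
      P {ω | ENNReal.ofReal K < fbNorm (fun n => ‖g n ω‖) p s q}
        ≤ ENNReal.ofReal (Real.exp (-c * K ^ 2)) := by
  obtain ⟨hind, hlaw⟩ := hg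
  have hp0 : (0:ℝ) < p := lt_of_lt_of_le one_pos hp
  set ε : ℝ := (-1 - (s - 1) * p) / (2 * p) with hεdef
  have hε : 0 < ε := by
    rw [hεdef]
    apply div_pos (by linarith) (by linarith)
  have hδ : (s + ε - 1) * p + 1 < 0 := by
    have hεp : ε * p = (-1 - (s - 1) * p) / 2 := by
      rw [hεdef]; field_simp
    nlinarith
  obtain ⟨C, hC, hdet⟩ := fb_det p s ε hp hε hδ
  have hsummable := exp_summable hε
  set S₀ : ℝ := ∑' n : {n : ℤ // n ≠ 0}, Real.exp (-(((n:ℤ):ℝ)^2)^ε / 32) with hS₀def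
  have hS₀ : 0 ≤ S₀ := tsum_nonneg fun n => Real.exp_nonneg _
  refine ⟨1 / (64 * C^2), by positivity, ?_⟩
  set c : ℝ := 1 / (64 * C^2) with hcdef
  have hc : 0 < c := by positivity
  set K₀ : ℝ := max C (Real.sqrt (Real.log (4 * S₀ + 4) / c)) with hK₀def
  have hK₀pos : 0 < K₀ := lt_of_lt_of_le hC (le_max_left _ _)
  refine ⟨K₀, hK₀pos, ?_⟩
  intro K hK
  have hKpos : 0 < K := lt_of_lt_of_le hK₀pos hK
  set M : ℝ := K / C with hMdef
  have hM0 : 0 < M := div_pos hKpos hC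
  have hM1 : 1 ≤ M := by
    rw [hMdef]
    rw [le_div_iff₀ hC]
    calc 1 * C = C := one_mul C
      _ ≤ K₀ := le_max_left _ _
      _ ≤ K := hK
  -- event inclusion into a union of tail events
  set E : {n : ℤ // n ≠ 0} → Set Ω :=
    fun n => {ω | M * (1 + ((n:ℤ):ℝ)^2) ^ (ε/2) < ‖g (n:ℤ) ω‖} with hE
  have hincl : {ω | ENNReal.ofReal K < fbNorm (fun n => ‖g n ω‖) p s q}
      ⊆ ⋃ n : {n : ℤ // n ≠ 0}, E n := by
    intro ω hω
    by_contra hcon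
    simp only [Set.mem_iUnion, not_exists] at hcon
    have hcon' : ∀ n : ℤ, n ≠ 0 →
        ‖g n ω‖ ≤ M * (1 + (n:ℝ)^2) ^ (ε/2) := by
      intro n hn
      have := hcon ⟨n, hn⟩
      rw [hE] at this
      simp only [Set.mem_setOf_eq, not_lt] at this
      exact this
    have hbound := hdet q hq (fun n => ‖g n ω‖) M hM0.le
      (fun n _ => norm_nonneg _) hcon'
    have hCM : C * M = K := by
      rw [hMdef]; field_simp
    rw [hCM] at hbound
    exact absurd hbound (not_le.mpr hω)
  -- tail estimate for each n
  have htail : ∀ n : {n : ℤ // n ≠ 0},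
      P (E n) ≤ ENNReal.ofReal
        (4 * Real.exp (-M^2/32) * Real.exp (-(((n:ℤ):ℝ)^2)^ε / 32)) := by
    intro n
    have hre : P.map (fun ω => (g (n:ℤ) ω).re) = gaussianReal 0 1 := by
      have := hlaw (n, true)
      simpa using this
    have him : P.map (fun ω => (g (n:ℤ) ω).im) = gaussianReal 0 1 := by
      have := hlaw (n, false)
      simpa using this
    set u : ℝ := M * (1 + ((n:ℤ):ℝ)^2) ^ (ε/2) with hu
    have hlampos : (0:ℝ) < (1 + ((n:ℤ):ℝ)^2) ^ (ε/2) := Real.rpow_pos_of_pos (by positivity) _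
    have hu0 : 0 ≤ u := by positivity
    have h1 := complex_tail P hre him hu0
    refine h1.trans (ENNReal.ofReal_le_ofReal ?_)
    rw [mul_assoc]
    apply mul_le_mul_of_nonneg_left _ (by norm_num : (0:ℝ) ≤ 4)
    rw [← Real.exp_add]
    apply Real.exp_le_exp.mpr
    -- -u^2/16 ≤ -M^2/32 - ((n)^2)^ε/32
    have hu2 : u^2 = M^2 * (1 + ((n:ℤ):ℝ)^2) ^ ε := by
      have hx : (0:ℝ) < 1 + ((n:ℤ):ℝ)^2 := by positivity
      have h2 : ((1 + ((n:ℤ):ℝ)^2) ^ (ε/2))^2 = (1 + ((n:ℤ):ℝ)^2) ^ ε := by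
        rw [sq, ← Real.rpow_add hx]
        congr 1
        ring
      rw [hu, mul_pow, h2]
    have hge1 : (1:ℝ) ≤ (1 + ((n:ℤ):ℝ)^2) ^ ε := by
      have := Real.rpow_le_rpow zero_le_one
        (by nlinarith [sq_nonneg ((n:ℤ):ℝ)] : (1:ℝ) ≤ 1 + ((n:ℤ):ℝ)^2) hε.le
      rwa [Real.one_rpow] at this
    have hgen : (((n:ℤ):ℝ)^2) ^ ε ≤ (1 + ((n:ℤ):ℝ)^2) ^ ε :=
      Real.rpow_le_rpow (sq_nonneg _) (by linarith) hε.le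
    have hM2 : (1:ℝ) ≤ M^2 := by nlinarith
    have hnε : (0:ℝ) ≤ (((n:ℤ):ℝ)^2) ^ ε := Real.rpow_nonneg (sq_nonneg _) _
    rw [hu2]
    nlinarith
  -- union bound and summation
  have hsum2 : Summable (fun n : {n : ℤ // n ≠ 0} =>
      4 * Real.exp (-M^2/32) * Real.exp (-(((n:ℤ):ℝ)^2)^ε / 32)) :=
    hsummable.mul_left _
  calc P {ω | ENNReal.ofReal K < fbNorm (fun n => ‖g n ω‖) p s q}
      ≤ P (⋃ n : {n : ℤ // n ≠ 0}, E n) := measure_mono hincl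
    _ ≤ ∑' n : {n : ℤ // n ≠ 0}, P (E n) := measure_iUnion_le _
    _ ≤ ∑' n : {n : ℤ // n ≠ 0}, ENNReal.ofReal
          (4 * Real.exp (-M^2/32) * Real.exp (-(((n:ℤ):ℝ)^2)^ε / 32)) :=
        ENNReal.tsum_le_tsum htail
    _ = ENNReal.ofReal (∑' n : {n : ℤ // n ≠ 0},
          4 * Real.exp (-M^2/32) * Real.exp (-(((n:ℤ):ℝ)^2)^ε / 32)) :=
        (ENNReal.ofReal_tsum_of_nonneg (fun n => by positivity) hsum2).symm
    _ = ENNReal.ofReal (4 * Real.exp (-M^2/32) * S₀) := by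
        rw [tsum_mul_left, hS₀def]
    _ ≤ ENNReal.ofReal (Real.exp (-c * K ^ 2)) := by
        apply ENNReal.ofReal_le_ofReal
        -- arithmetic: 4 * exp(-M²/32) * S₀ ≤ exp(-cK²)
        have hMK : M^2 / 32 = 2 * (c * K^2) := by
          rw [hMdef, hcdef]
          field_simp
          ring
        have hlogpos : 0 ≤ Real.log (4 * S₀ + 4) / c := by
          apply div_nonneg _ hc.le
          apply Real.log_nonneg
          linarith
        have hK2 : Real.log (4 * S₀ + 4) / c ≤ K^2 := by
          have h1 : Real.sqrt (Real.log (4 * S₀ + 4) / c) ≤ K :=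
            le_trans (le_max_right _ _) hK
          calc Real.log (4 * S₀ + 4) / c
              = Real.sqrt (Real.log (4 * S₀ + 4) / c) ^ 2 := (Real.sq_sqrt hlogpos).symm
            _ ≤ K^2 := pow_le_pow_left₀ (Real.sqrt_nonneg _) h1 2
        have hexp : 4 * S₀ + 4 ≤ Real.exp (c * K^2) := by
          have h2 : Real.log (4 * S₀ + 4) ≤ c * K^2 := by
            rw [div_le_iff₀ hc] at hK2
            linarith [hK2]
          calc 4 * S₀ + 4 = Real.exp (Real.log (4 * S₀ + 4)) :=
                (Real.exp_log (by linarith)).symm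
            _ ≤ Real.exp (c * K^2) := Real.exp_le_exp.mpr h2
        have hepos : (0:ℝ) < Real.exp (c * K^2) := Real.exp_pos _
        have hfact : Real.exp (-(M^2/32)) = Real.exp (-(c * K^2)) * Real.exp (-(c * K^2)) := by
          rw [← Real.exp_add, hMK]
          ring_nf
        have hkey : 4 * S₀ * Real.exp (-(c * K^2)) ≤ 1 := by
          have h4S : 4 * S₀ ≤ Real.exp (c * K^2) := by linarith
          calc 4 * S₀ * Real.exp (-(c * K^2))
              ≤ Real.exp (c * K^2) * Real.exp (-(c * K^2)) :=
                mul_le_mul_of_nonneg_right h4S (Real.exp_nonneg _)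
            _ = 1 := by rw [← Real.exp_add]; simp
        calc 4 * Real.exp (-M^2/32) * S₀
            = (4 * S₀ * Real.exp (-(c * K^2))) * Real.exp (-(c * K^2)) := by
              rw [show -M^2/32 = -(M^2/32) by ring, hfact]; ring
          _ ≤ 1 * Real.exp (-(c * K^2)) := by
              apply mul_le_mul_of_nonneg_right hkey (Real.exp_nonneg _)
          _ = Real.exp (-c * K^2) := by rw [one_mul]; ring_nf
end
end

section
/- Let 0 < δ < 1/2. Then almost surely lim_{j→∞} 2^{2δj} · ( max_{|n|∼2^j} |g_n|² ) / ( Σ_{|n|∼2^j} |g_n|² ) = 0; i.e., along dyadic blocks M = 2^j, the ratio M^{2δ} max_{|n|∼M}|g_n|² / Σ_{|n|∼M}|g_n|² tends to zero almost surely. -/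
open MeasureTheory ProbabilityTheory Filter

noncomputable section

section AuxiliaryLemmas

open Real
open scoped NNReal ENNReal


lemma myGauss_integral_eq (f : ℝ → ℝ) :
    ∫ x, f x ∂(gaussianReal 0 1) = ∫ x, gaussianPDFReal 0 1 x * f x := by
  rw [gaussianReal_of_var_ne_zero 0 one_ne_zero]
  have h : (gaussianPDF 0 1) = fun x => ((Real.toNNReal (gaussianPDFReal 0 1 x) : ℝ≥0) : ℝ≥0∞) := rfl
  rw [h, integral_withDensity_eq_integral_smul (measurable_gaussianPDFReal 0 1).real_toNNReal f]
  congr 1; ext x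
  rw [NNReal.smul_def, Real.coe_toNNReal _ (gaussianPDFReal_nonneg 0 1 x), smul_eq_mul]

lemma myGauss_pdf_mul_exp (t x : ℝ) :
    gaussianPDFReal 0 1 x * Real.exp (t * x)
      = Real.exp (t ^ 2 / 2) * ((Real.sqrt (2 * π))⁻¹ * Real.exp (-(1/2) * (x - t) ^ 2)) := by
  rw [gaussianPDFReal]
  push_cast
  rw [show (2 * π * 1 : ℝ) = 2 * π by ring,
    show (-(x - 0) ^ 2 / (2 * 1) : ℝ) = t ^ 2 / 2 + -(1/2) * (x - t) ^ 2 + -(t * x) by ring,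
    Real.exp_add, Real.exp_add, Real.exp_neg]
  have := Real.exp_ne_zero (t * x)
  field_simp

lemma myGauss_integrable_exp_mul (t : ℝ) :
    Integrable (fun x => Real.exp (t * x)) (gaussianReal 0 1) := by
  rw [gaussianReal_of_var_ne_zero 0 one_ne_zero]
  rw [integrable_withDensity_iff (measurable_gaussianPDF 0 1)
    (Filter.Eventually.of_forall fun x => ENNReal.ofReal_lt_top)]
  have : (fun x => Real.exp (t * x) * (gaussianPDF 0 1 x).toReal)
      = fun x => Real.exp (t ^ 2 / 2) * ((Real.sqrt (2 * π))⁻¹ * Real.exp (-(1/2) * (x - t) ^ 2)) := by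
    ext x
    rw [gaussianPDF, ENNReal.toReal_ofReal (gaussianPDFReal_nonneg 0 1 x), mul_comm,
      myGauss_pdf_mul_exp]
  rw [this]
  exact (((integrable_exp_neg_mul_sq (by norm_num : (0:ℝ) < 1/2)).comp_sub_right t).const_mul
    _).const_mul _

lemma myGauss_integral_exp_mul (t : ℝ) :
    ∫ x, Real.exp (t * x) ∂(gaussianReal 0 1) = Real.exp (t ^ 2 / 2) := by
  rw [myGauss_integral_eq]
  simp_rw [myGauss_pdf_mul_exp t]
  rw [integral_const_mul, integral_const_mul,
    integral_sub_right_eq_self (fun x => Real.exp (-(1/2) * x ^ 2)) t, integral_gaussian]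
  rw [show π / (1/2) = 2 * π by ring]
  rw [inv_mul_cancel₀ (by positivity : Real.sqrt (2 * π) ≠ 0), mul_one]

lemma myGauss_integral_exp_neg_sq :
    ∫ x, Real.exp (-1 * x ^ 2) ∂(gaussianReal 0 1) = (Real.sqrt 3)⁻¹ := by
  rw [myGauss_integral_eq]
  have : (fun x => gaussianPDFReal 0 1 x * Real.exp (-1 * x ^ 2))
      = fun x => (Real.sqrt (2 * π))⁻¹ * Real.exp (-(3/2) * x ^ 2) := by
    ext x
    rw [gaussianPDFReal]
    push_cast
    rw [show (2 * π * 1 : ℝ) = 2 * π by ring, mul_assoc, ← Real.exp_add,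
      show (-(x - 0) ^ 2 / (2 * 1) + -1 * x ^ 2 : ℝ) = -(3/2) * x ^ 2 by ring]
  rw [this, integral_const_mul, integral_gaussian,
    show π / (3/2) = (2 * π) / 3 by ring, Real.sqrt_div (by positivity)]
  have h2 : Real.sqrt (2 * π) ≠ 0 := by positivity
  field_simp

variable {Ω : Type*} [MeasurableSpace Ω] {P : Measure Ω} [IsProbabilityMeasure P]

lemma myMgf_eq {Y : Ω → ℝ} (hY : AEMeasurable Y P) (hmap : P.map Y = gaussianReal 0 1)
    (t : ℝ) : mgf Y P t = Real.exp (t ^ 2 / 2) := by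
  rw [mgf, ← myGauss_integral_exp_mul t, ← hmap,
    integral_map hY ((by continuity : Continuous (fun x : ℝ => Real.exp (t * x))).aestronglyMeasurable)]

lemma myInt_exp {Y : Ω → ℝ} (hY : AEMeasurable Y P) (hmap : P.map Y = gaussianReal 0 1)
    (t : ℝ) : Integrable (fun ω => Real.exp (t * Y ω)) P := by
  have h := myGauss_integrable_exp_mul t
  rw [← hmap] at h
  exact (integrable_map_measure
    ((by continuity : Continuous (fun x : ℝ => Real.exp (t * x))).aestronglyMeasurable) hY).mp h

lemma myMgf_sq_eq {Y : Ω → ℝ} (hY : AEMeasurable Y P) (hmap : P.map Y = gaussianReal 0 1) :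
    mgf (fun ω => (Y ω) ^ 2) P (-1) = (Real.sqrt 3)⁻¹ := by
  rw [mgf, ← myGauss_integral_exp_neg_sq, ← hmap,
    integral_map hY ((by continuity : Continuous (fun x : ℝ => Real.exp (-1 * x ^ 2))).aestronglyMeasurable)]

lemma myTail {Y : Ω → ℝ} (hY : AEMeasurable Y P) (hmap : P.map Y = gaussianReal 0 1)
    {s : ℝ} (hs : 0 ≤ s) :
    P {ω | s ^ 2 ≤ (Y ω) ^ 2} ≤ ENNReal.ofReal (2 * Real.exp (-s ^ 2 / 2)) := by
  have hsub : {ω | s ^ 2 ≤ (Y ω) ^ 2} ⊆ {ω | s ≤ Y ω} ∪ {ω | Y ω ≤ -s} := by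
    intro ω hω
    by_contra hc
    simp only [Set.mem_union, Set.mem_setOf_eq, not_or, not_le] at hc
    have := sq_lt_sq' hc.2 hc.1
    exact absurd hω (by simpa using not_le.2 this)
  have h1 : P {ω | s ≤ Y ω} ≤ ENNReal.ofReal (Real.exp (-s ^ 2 / 2)) := by
    have := measure_ge_le_exp_mul_mgf (μ := P) (X := Y) s hs (myInt_exp hY hmap s)
    rw [myMgf_eq hY hmap, ← Real.exp_add] at this
    rw [← ENNReal.ofReal_toReal (measure_ne_top P _)]
    exact ENNReal.ofReal_le_ofReal (le_trans this (le_of_eq (by ring_nf)))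
  have h2 : P {ω | Y ω ≤ -s} ≤ ENNReal.ofReal (Real.exp (-s ^ 2 / 2)) := by
    have := measure_le_le_exp_mul_mgf (μ := P) (X := Y) (-s) (neg_nonpos.2 hs)
      (myInt_exp hY hmap (-s))
    rw [myMgf_eq hY hmap, ← Real.exp_add] at this
    rw [← ENNReal.ofReal_toReal (measure_ne_top P _)]
    exact ENNReal.ofReal_le_ofReal (le_trans this (le_of_eq (by ring_nf)))
  calc P {ω | s ^ 2 ≤ (Y ω) ^ 2} ≤ P ({ω | s ≤ Y ω} ∪ {ω | Y ω ≤ -s}) := measure_mono hsub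
    _ ≤ P {ω | s ≤ Y ω} + P {ω | Y ω ≤ -s} := measure_union_le _ _
    _ ≤ ENNReal.ofReal (Real.exp (-s ^ 2 / 2)) + ENNReal.ofReal (Real.exp (-s ^ 2 / 2)) :=
        add_le_add h1 h2
    _ = ENNReal.ofReal (2 * Real.exp (-s ^ 2 / 2)) := by
        rw [← ENNReal.ofReal_add (Real.exp_nonneg _) (Real.exp_nonneg _)]
        · ring_nf


lemma iIndepFun_ae_congr {Ω ι : Type*} [MeasurableSpace Ω] {μ : Measure Ω}
    [IsProbabilityMeasure μ] {β : ι → Type*}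
    [m : ∀ i, MeasurableSpace (β i)] {f f' : ∀ i, Ω → β i}
    (hff' : ∀ i, f i =ᵐ[μ] f' i) (hf : iIndepFun f μ) : iIndepFun f' μ := by
  rw [iIndepFun_iff_measure_inter_preimage_eq_mul] at hf ⊢
  intro S sets hsets
  have hs : ∀ i ∈ S, μ (f i ⁻¹' sets i) = μ (f' i ⁻¹' sets i) := by
    intro i _
    apply measure_congr
    filter_upwards [hff' i] with ω hω
    show (ω ∈ f i ⁻¹' sets i) = (ω ∈ f' i ⁻¹' sets i)
    simp only [Set.mem_preimage, hω]
  have hInter : μ (⋂ i ∈ S, f i ⁻¹' sets i) = μ (⋂ i ∈ S, f' i ⁻¹' sets i) := by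
    apply measure_congr
    have h' : ∀ᵐ ω ∂μ, ∀ i ∈ (S : Set ι), f i ω = f' i ω :=
      (ae_ball_iff S.countable_toSet).2 fun i _ => hff' i
    filter_upwards [h'] with ω hω
    show (ω ∈ ⋂ i ∈ S, f i ⁻¹' sets i) = (ω ∈ ⋂ i ∈ S, f' i ⁻¹' sets i)
    simp only [Set.mem_iInter, Set.mem_preimage]
    exact propext (forall_congr' fun i => forall_congr' fun hi => by rw [hω i hi])
  rw [← hInter, hf S hsets]
  exact Finset.prod_congr rfl hs

lemma dyadicBlock_ne_zero {j : ℕ} {n : ℤ} (hn : n ∈ dyadicBlock j) : n ≠ 0 := by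
  rcases Finset.mem_filter.1 hn with ⟨-, h1, -⟩
  intro h
  rw [h] at h1
  simp at h1
  exact absurd h1 (not_lt.2 (by positivity))

lemma card_dyadicBlock_le (j : ℕ) : (dyadicBlock j).card ≤ 2 ^ (j + 2) := by
  have h1 : (dyadicBlock j).card ≤ (Finset.Icc (-(2 ^ j : ℤ)) (2 ^ j)).card :=
    Finset.card_le_card (Finset.filter_subset _ _)
  rw [Int.card_Icc] at h1
  have h2 : ((2:ℤ)^j + 1 - -(2^j)) = 2 * 2^j + 1 := by ring
  rw [h2] at h1
  have hz : ((2:ℤ)^j) = ((2^j : ℕ) : ℤ) := by push_cast; ring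
  rw [hz] at h1
  have h4 : 2 ^ (j + 2) = 4 * 2 ^ j := by ring
  have hp : 0 < 2^j := by positivity
  omega

lemma card_dyadicBlock_ge {j : ℕ} (hj : 1 ≤ j) : 2 ^ (j - 1) ≤ (dyadicBlock j).card := by
  have hsub : Finset.Ioc ((2:ℤ) ^ (j-1)) (2 ^ j) ⊆ dyadicBlock j := by
    intro n hn
    rw [Finset.mem_Ioc] at hn
    have hp : (0:ℤ) < 2^(j-1) := by positivity
    have h2 : (2:ℤ) * 2^(j-1) = 2^j := by
      rw [← pow_succ']
      congr 1
      omega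
    have hpos : 0 < n := lt_trans hp hn.1
    have habs : |n| = n := abs_of_pos hpos
    refine Finset.mem_filter.2 ⟨Finset.mem_Icc.2 ⟨?_, hn.2⟩, ?_, ?_⟩
    · have : (0:ℤ) < 2^j := by positivity
      omega
    · rw [habs, ← h2]
      omega
    · rw [habs]; exact hn.2
  have := Finset.card_le_card hsub
  rw [Int.card_Ioc] at this
  have h2 : (2:ℤ) * 2^(j-1) = 2^j := by
    rw [← pow_succ']; congr 1; omega
  have h3 : ((2:ℤ)^j - 2^(j-1)).toNat = 2^(j-1) := by
    have hp : (0:ℤ) < 2^(j-1) := by positivity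
    have hz : ((2:ℤ)^(j-1) : ℤ) = ((2^(j-1) : ℕ) : ℤ) := by push_cast; ring
    have hz2 : ((2:ℤ)^j : ℤ) = ((2^j : ℕ) : ℤ) := by push_cast; ring
    have h5 : 2^j = 2 * 2^(j-1) := by
      conv_lhs => rw [show j = (j-1) + 1 by omega]
      ring
    omega
  rw [h3] at this
  exact this


def blockNZ (j : ℕ) : Finset {n : ℤ // n ≠ 0} :=
  (dyadicBlock j).attach.map ⟨fun x => ⟨x.1, dyadicBlock_ne_zero x.2⟩,
    fun a b h => by
      apply Subtype.ext
      have h2 := congrArg Subtype.val h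
      simpa using h2⟩

def gIdxSet (j : ℕ) : Finset ({n : ℤ // n ≠ 0} × Bool) := (blockNZ j) ×ˢ Finset.univ

lemma card_gIdxSet (j : ℕ) : (gIdxSet j).card = 2 * (dyadicBlock j).card := by
  simp [gIdxSet, blockNZ, Finset.card_product, mul_comm]

def Fsq {Ω : Type*} (Y : {n : ℤ // n ≠ 0} × Bool → Ω → ℝ) (n : ℤ) (ω : Ω) : ℝ :=
  if h : n = 0 then 0 else Y (⟨n, h⟩, true) ω ^ 2 + Y (⟨n, h⟩, false) ω ^ 2

lemma Fsq_nonneg {Ω : Type*} (Y : {n : ℤ // n ≠ 0} × Bool → Ω → ℝ) (n : ℤ) (ω : Ω) :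
    0 ≤ Fsq Y n ω := by
  unfold Fsq
  split
  · exact le_refl _
  · positivity

lemma sum_Fsq {Ω : Type*} (Y : {n : ℤ // n ≠ 0} × Bool → Ω → ℝ) (j : ℕ) (ω : Ω) :
    ∑ n ∈ dyadicBlock j, Fsq Y n ω = ∑ i ∈ gIdxSet j, (Y i ω) ^ 2 := by
  rw [gIdxSet, Finset.sum_product]
  have hb : ∀ p : {n : ℤ // n ≠ 0}, (∑ b : Bool, (Y (p, b) ω) ^ 2)
      = Y (p, true) ω ^ 2 + Y (p, false) ω ^ 2 := by
    intro p; rw [Fintype.sum_bool]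
  simp_rw [hb]
  rw [blockNZ, Finset.sum_map, ← Finset.sum_attach (dyadicBlock j) (fun n => Fsq Y n ω)]
  apply Finset.sum_congr rfl
  intro x _
  rw [Fsq, dif_neg (dyadicBlock_ne_zero x.2)]
  rfl
lemma le_card_gIdxSet (j : ℕ) : j ≤ (gIdxSet j).card := by
  rcases Nat.eq_zero_or_pos j with h | h
  · simp [h]
  · have h1 := card_dyadicBlock_ge h
    have h2 : j < 2 ^ j := Nat.lt_two_pow_self
    have h3 : 2 ^ j = 2 * 2 ^ (j - 1) := by
      conv_lhs => rw [show j = (j - 1) + 1 by omega]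
      ring
    rw [card_gIdxSet]
    omega

lemma aux_main {Ω : Type*} [MeasurableSpace Ω] (P : Measure Ω) [IsProbabilityMeasure P]
    (Y : {n : ℤ // n ≠ 0} × Bool → Ω → ℝ) (hmeas : ∀ i, Measurable (Y i))
    (hind : iIndepFun Y P)
    (hmap : ∀ i, P.map (Y i) = gaussianReal 0 1)
    (δ : ℝ) (hδ0 : 0 < δ) (hδ : δ < 1 / 2) :
    ∀ᵐ ω ∂P,
      Tendsto
        (fun j : ℕ => (2 : ℝ) ^ (2 * δ * (j : ℝ)) * (⨆ n ∈ dyadicBlock j, Fsq Y n ω) /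
          ∑ n ∈ dyadicBlock j, Fsq Y n ω) atTop (nhds 0) := by
  classical
  set Z : {n : ℤ // n ≠ 0} × Bool → Ω → ℝ := fun i => (fun x : ℝ => x ^ 2) ∘ Y i with hZdef
  have hZmeas : ∀ i, Measurable (Z i) := fun i => ((continuous_pow 2).measurable).comp (hmeas i)
  have hZind : iIndepFun Z P :=
    hind.comp _ (fun _ => (continuous_pow 2).measurable)
  have hZval : ∀ i, mgf (Z i) P (-1) = (Real.sqrt 3)⁻¹ := fun i =>
    myMgf_sq_eq (hmeas i).aemeasurable (hmap i)
  set N : ℕ → ℕ := fun j => (gIdxSet j).card with hNdef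
  -- the "small sum" events
  set B : ℕ → Set Ω := fun j => {ω | (∑ i ∈ gIdxSet j, Z i) ω ≤ (N j : ℝ) / 2} with hBdef
  set r : ℝ := Real.exp 2⁻¹ * (Real.sqrt 3)⁻¹ with hrdef
  have hr0 : 0 ≤ r := by positivity
  have hrsq : r ^ 2 = Real.exp 1 / 3 := by
    rw [hrdef, mul_pow, ← Real.exp_nat_mul, inv_pow, Real.sq_sqrt (by norm_num : (0:ℝ) ≤ 3)]
    norm_num
    ring
  have hr1 : r < 1 := by nlinarith [Real.exp_one_lt_d9]
  have hBbound : ∀ j, P (B j) ≤ ENNReal.ofReal (r ^ j) := by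
    intro j
    have hsmeas : Measurable (fun ω => ∑ i ∈ gIdxSet j, Z i ω) :=
      Finset.measurable_sum _ (fun i _ => hZmeas i)
    have hsapp : (∑ i ∈ gIdxSet j, Z i) = fun ω => ∑ i ∈ gIdxSet j, Z i ω := by
      ext ω; simp [Finset.sum_apply]
    have hint : Integrable (fun ω => Real.exp ((-1) * (∑ i ∈ gIdxSet j, Z i) ω)) P := by
      refine Integrable.mono' (integrable_const 1) ?_ ?_
      · apply Measurable.aestronglyMeasurable
        apply Real.measurable_exp.comp
        apply Measurable.const_mul
        rw [hsapp]; exact hsmeas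
      · filter_upwards with ω
        rw [Real.norm_eq_abs, abs_of_pos (Real.exp_pos _), Real.exp_le_one_iff, hsapp]
        have : 0 ≤ ∑ i ∈ gIdxSet j, Z i ω :=
          Finset.sum_nonneg fun i _ => by simp [hZdef]; positivity
        linarith
    have hch := measure_le_le_exp_mul_mgf (μ := P) (X := ∑ i ∈ gIdxSet j, Z i)
      ((N j : ℝ) / 2) (by norm_num : (-1:ℝ) ≤ 0) hint
    rw [hZind.mgf_sum hZmeas (gIdxSet j),
      Finset.prod_congr rfl (fun i _ => hZval i), Finset.prod_const] at hch
    have heq : Real.exp (-(-1) * ((N j : ℝ) / 2)) * ((Real.sqrt 3)⁻¹) ^ (gIdxSet j).card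
        = r ^ (N j) := by
      rw [hrdef, mul_pow]
      congr 1
      rw [← Real.exp_nat_mul]
      congr 1
      push_cast
      ring
    rw [heq] at hch
    have : P (B j) ≤ ENNReal.ofReal (r ^ N j) := by
      rw [← ENNReal.ofReal_toReal (measure_ne_top P (B j))]
      exact ENNReal.ofReal_le_ofReal hch
    refine le_trans this (ENNReal.ofReal_le_ofReal ?_)
    exact pow_le_pow_of_le_one hr0 hr1.le (le_card_gIdxSet j)
  have hBsum : ∑' j, P (B j) ≠ ⊤ := by
    have hle : ∑' j, P (B j) ≤ ∑' j : ℕ, (ENNReal.ofReal r) ^ j := by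
      refine ENNReal.tsum_le_tsum fun j => ?_
      rw [← ENNReal.ofReal_pow hr0]
      exact hBbound j
    rw [ENNReal.tsum_geometric] at hle
    refine ne_top_of_le_ne_top (ENNReal.inv_ne_top.2 ?_) hle
    rw [Ne, tsub_eq_zero_iff_le, not_le]
    exact ENNReal.ofReal_lt_one.2 hr1
  -- the "large max" events
  set A : ℕ → Set Ω := fun j =>
    ⋃ i ∈ gIdxSet j, {ω | ((j : ℝ) / Real.sqrt 2) ^ 2 ≤ (Y i ω) ^ 2} with hAdef
  set q : ℝ := 2 * Real.exp (-2) with hqdef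
  have hq0 : 0 ≤ q := by positivity
  have hqexp : Real.exp (-2) * Real.exp 2 = 1 := by rw [← Real.exp_add]; norm_num
  have hq1 : q < 1 := by
    nlinarith [Real.add_one_le_exp (2:ℝ), Real.exp_pos (-2:ℝ), Real.exp_pos (2:ℝ)]
  have hAbound : ∀ j, P (A j) ≤ ENNReal.ofReal ((16 * Real.exp 16) * q ^ j) := by
    intro j
    have hsq : ((j : ℝ) / Real.sqrt 2) ^ 2 = (j : ℝ) ^ 2 / 2 := by
      rw [div_pow, Real.sq_sqrt (by norm_num : (0:ℝ) ≤ 2)]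
    have step1 : P (A j) ≤ ∑ i ∈ gIdxSet j, P {ω | ((j:ℝ)/Real.sqrt 2) ^ 2 ≤ (Y i ω) ^ 2} :=
      measure_biUnion_finset_le _ _
    have step2 : ∑ i ∈ gIdxSet j, P {ω | ((j:ℝ)/Real.sqrt 2) ^ 2 ≤ (Y i ω) ^ 2}
        ≤ ∑ _i ∈ gIdxSet j, ENNReal.ofReal (2 * Real.exp (-((j:ℝ)/Real.sqrt 2) ^ 2 / 2)) :=
      Finset.sum_le_sum fun i _ =>
        myTail (hmeas i).aemeasurable (hmap i) (by positivity)
    rw [Finset.sum_const, nsmul_eq_mul] at step2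
    have hNle : ((gIdxSet j).card : ℝ≥0∞) ≤ ENNReal.ofReal ((2:ℝ) ^ (j + 3)) := by
      have h1 : (gIdxSet j).card ≤ 2 ^ (j + 3) := by
        rw [card_gIdxSet]
        have := card_dyadicBlock_le j
        have h2 : 2 ^ (j + 3) = 2 * 2 ^ (j + 2) := by ring
        omega
      calc ((gIdxSet j).card : ℝ≥0∞) ≤ ((2 ^ (j + 3) : ℕ) : ℝ≥0∞) := Nat.cast_le.2 h1
        _ = ENNReal.ofReal ((2:ℝ) ^ (j + 3)) := by
            rw [ENNReal.ofReal_pow (by norm_num)]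
            simp [ENNReal.ofReal_ofNat]
    have step3 : P (A j) ≤ ENNReal.ofReal ((2:ℝ) ^ (j + 3))
        * ENNReal.ofReal (2 * Real.exp (-((j:ℝ)/Real.sqrt 2) ^ 2 / 2)) := by
      refine le_trans step1 (le_trans step2 ?_)
      exact mul_le_mul_left hNle _
    rw [← ENNReal.ofReal_mul (by positivity)] at step3
    refine le_trans step3 (ENNReal.ofReal_le_ofReal ?_)
    rw [hsq]
    have hexpineq : Real.exp (-((j:ℝ) ^ 2 / 2) / 2) ≤ Real.exp 16 * Real.exp (-2) ^ j := by
      rw [← Real.exp_nat_mul, ← Real.exp_add]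
      apply Real.exp_le_exp.2
      have : (0:ℝ) ≤ ((j:ℝ)/2 - 2) ^ 2 := sq_nonneg _
      nlinarith
    calc (2:ℝ) ^ (j + 3) * (2 * Real.exp (-((j:ℝ) ^ 2 / 2) / 2))
        = 16 * 2 ^ j * Real.exp (-((j:ℝ) ^ 2 / 2) / 2) := by ring
      _ ≤ 16 * 2 ^ j * (Real.exp 16 * Real.exp (-2) ^ j) := by
          apply mul_le_mul_of_nonneg_left hexpineq (by positivity)
      _ = (16 * Real.exp 16) * q ^ j := by rw [hqdef, mul_pow]; ring
  have hAsum : ∑' j, P (A j) ≠ ⊤ := by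
    have hle : ∑' j, P (A j) ≤ ∑' j : ℕ,
        ENNReal.ofReal (16 * Real.exp 16) * (ENNReal.ofReal q) ^ j := by
      refine ENNReal.tsum_le_tsum fun j => ?_
      rw [← ENNReal.ofReal_pow hq0, ← ENNReal.ofReal_mul (by positivity)]
      exact hAbound j
    rw [ENNReal.tsum_mul_left, ENNReal.tsum_geometric] at hle
    refine ne_top_of_le_ne_top (ENNReal.mul_ne_top ENNReal.ofReal_ne_top
      (ENNReal.inv_ne_top.2 ?_)) hle
    rw [Ne, tsub_eq_zero_iff_le, not_le]
    exact ENNReal.ofReal_lt_one.2 hq1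
  have hAev := ae_eventually_notMem hAsum
  have hBev := ae_eventually_notMem hBsum
  -- the deterministic bounding sequence
  set ρ : ℝ := (2:ℝ) ^ (2 * δ - 1) with hρdef
  have hρlt : ρ < 1 := Real.rpow_lt_one_of_one_lt_of_neg one_lt_two (by linarith)
  have hρnn : 0 ≤ ρ := Real.rpow_nonneg (by norm_num) _
  set b : ℕ → ℝ := fun j => 2 * ((j : ℝ) ^ 2 * ρ ^ j) with hbdef
  have hbtend : Tendsto b atTop (nhds 0) := by
    have h1 := tendsto_pow_const_mul_const_pow_of_lt_one 2 hρnn hρlt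
    have h2 := h1.const_mul (2:ℝ)
    simpa using h2
  filter_upwards [hAev, hBev] with ω hA hB
  refine squeeze_zero' (Eventually.of_forall fun j => ?_) ?_ hbtend
  · refine div_nonneg (mul_nonneg (Real.rpow_nonneg (by norm_num) _) ?_)
      (Finset.sum_nonneg fun n _ => Fsq_nonneg Y n ω)
    exact Real.iSup_nonneg fun n => Real.iSup_nonneg fun _ => Fsq_nonneg Y n ω
  filter_upwards [hA, hB, eventually_ge_atTop 1] with j hAj hBj hj1
  have hS : (N j : ℝ) / 2 < ∑ n ∈ dyadicBlock j, Fsq Y n ω := by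
    rw [sum_Fsq]
    by_contra h
    push_neg at h
    apply hBj
    show (∑ i ∈ gIdxSet j, Z i) ω ≤ (N j : ℝ) / 2
    simpa [Finset.sum_apply, hZdef] using h
  have hM : (⨆ n ∈ dyadicBlock j, Fsq Y n ω) ≤ (j : ℝ) ^ 2 := by
    refine Real.iSup_le (fun n => Real.iSup_le (fun hn => ?_) (sq_nonneg _)) (sq_nonneg _)
    have hcomp : ∀ i ∈ gIdxSet j, (Y i ω) ^ 2 < (j : ℝ) ^ 2 / 2 := by
      intro i hi
      by_contra hc
      push_neg at hc
      apply hAj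
      refine Set.mem_biUnion hi ?_
      show ((j : ℝ) / Real.sqrt 2) ^ 2 ≤ (Y i ω) ^ 2
      rw [div_pow, Real.sq_sqrt (by norm_num : (0:ℝ) ≤ 2)]
      exact hc
    have hne := dyadicBlock_ne_zero hn
    have hmem : ∀ bl : Bool, ((⟨n, hne⟩ : {n : ℤ // n ≠ 0}), bl) ∈ gIdxSet j := by
      intro bl
      refine Finset.mem_product.2 ⟨?_, Finset.mem_univ _⟩
      exact Finset.mem_map.2 ⟨⟨n, hn⟩, Finset.mem_attach _ _, rfl⟩
    rw [Fsq, dif_neg hne]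
    have h1 := hcomp _ (hmem true)
    have h2 := hcomp _ (hmem false)
    linarith
  set d : ℝ := ((2 ^ (j - 1) : ℕ) : ℝ) with hddef
  have hd : 0 < d := by positivity
  have hdN : d ≤ (N j : ℝ) / 2 := by
    have h1 := card_dyadicBlock_ge hj1
    have h2 : 2 * 2 ^ (j - 1) ≤ N j := by rw [hNdef]; simp only [card_gIdxSet]; omega
    rw [hddef]
    rw [le_div_iff₀ (by norm_num : (0:ℝ) < 2)]
    calc ((2 ^ (j-1) : ℕ) : ℝ) * 2 = ((2 * 2 ^ (j-1) : ℕ) : ℝ) := by push_cast; ring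
      _ ≤ (N j : ℝ) := Nat.cast_le.2 h2
  have hdS : d ≤ ∑ n ∈ dyadicBlock j, Fsq Y n ω := le_of_lt (lt_of_le_of_lt hdN hS)
  have hchain : (2:ℝ) ^ (2 * δ * (j:ℝ)) * (⨆ n ∈ dyadicBlock j, Fsq Y n ω) /
      ∑ n ∈ dyadicBlock j, Fsq Y n ω ≤ (2:ℝ) ^ (2 * δ * (j:ℝ)) * (j:ℝ) ^ 2 / d :=
    div_le_div₀ (by positivity)
      (mul_le_mul_of_nonneg_left hM (Real.rpow_nonneg (by norm_num) _)) hd hdS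
  refine le_trans hchain (le_of_eq ?_)
  have hdeq : d = (2:ℝ) ^ ((j:ℝ) - 1) := by
    rw [hddef]
    push_cast
    rw [← Real.rpow_natCast 2 (j - 1), Nat.cast_sub hj1, Nat.cast_one]
  have hkey : (2:ℝ) ^ (2 * δ * (j:ℝ)) / (2:ℝ) ^ ((j:ℝ) - 1) = 2 * ρ ^ j := by
    rw [← Real.rpow_sub (by norm_num : (0:ℝ) < 2),
      show 2 * δ * (j:ℝ) - ((j:ℝ) - 1) = (2 * δ - 1) * (j:ℝ) + 1 by ring,
      Real.rpow_add (by norm_num : (0:ℝ) < 2), Real.rpow_one, mul_comm]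
    congr 1
    rw [hρdef, ← Real.rpow_natCast ((2:ℝ) ^ (2 * δ - 1)) j,
      ← Real.rpow_mul (by norm_num : (0:ℝ) ≤ 2)]
  rw [hdeq]
  calc (2:ℝ) ^ (2 * δ * (j:ℝ)) * (j:ℝ) ^ 2 / (2:ℝ) ^ ((j:ℝ) - 1)
      = ((2:ℝ) ^ (2 * δ * (j:ℝ)) / (2:ℝ) ^ ((j:ℝ) - 1)) * (j:ℝ) ^ 2 := by ring
    _ = 2 * ρ ^ j * (j:ℝ) ^ 2 := by rw [hkey]
    _ = b j := by rw [hbdef]; ring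

end AuxiliaryLemmas

section MainTheorem
open Real
open scoped NNReal ENNReal

/-- For `0 < δ < 1/2`, almost surely
`2^{2δj} · max_{|n|∼2^j} |gₙ|² / Σ_{|n|∼2^j} |gₙ|² → 0` as `j → ∞`. -/
theorem dyadic_block_max_over_sum_tendsto_zero
    {Ω : Type*} [MeasurableSpace Ω] (P : Measure Ω) [IsProbabilityMeasure P]
    (g : ℤ → Ω → ℂ) (hg : IsStdComplexGaussianFamily P g)
    (δ : ℝ) (hδ0 : 0 < δ) (hδ : δ < 1 / 2) :
    ∀ᵐ ω ∂P,
      Tendsto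
        (fun j : ℕ =>
          (2 : ℝ) ^ (2 * δ * (j : ℝ)) *
            (⨆ n ∈ dyadicBlock j, ‖g n ω‖ ^ 2) /
              ∑ n ∈ dyadicBlock j, ‖g n ω‖ ^ 2)
        atTop (nhds 0) := by
  obtain ⟨hind, hmapX⟩ := hg
  set X : {n : ℤ // n ≠ 0} × Bool → Ω → ℝ := fun i => fun ω =>
    if i.2 then (g (i.1 : ℤ) ω).re else (g (i.1 : ℤ) ω).im with hXdef
  have hXae : ∀ i, AEMeasurable (X i) P := by
    intro i
    by_contra h
    have h0 := Measure.map_of_not_aemeasurable (f := X i) (μ := P) h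
    have h1 : gaussianReal 0 1 = (0 : Measure ℝ) := by
      rw [← hmapX i]
      exact h0
    have h2 := congrArg (fun m : Measure ℝ => m Set.univ) h1
    simp [measure_univ] at h2
  set Y : {n : ℤ // n ≠ 0} × Bool → Ω → ℝ := fun i => (hXae i).mk (X i) with hYdef
  have hYmeas : ∀ i, Measurable (Y i) := fun i => (hXae i).measurable_mk
  have hXY : ∀ i, X i =ᵐ[P] Y i := fun i => (hXae i).ae_eq_mk
  have hYind : iIndepFun Y P :=
    iIndepFun_ae_congr hXY hind
  have hYmap : ∀ i, P.map (Y i) = gaussianReal 0 1 := by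
    intro i
    rw [← Measure.map_congr (hXY i)]
    exact hmapX i
  have hmain := aux_main P Y hYmeas hYind hYmap δ hδ0 hδ
  have hall : ∀ᵐ ω ∂P, ∀ i, X i ω = Y i ω := ae_all_iff.2 hXY
  filter_upwards [hmain, hall] with ω hT hXYω
  refine hT.congr fun j => ?_
  have hFn : ∀ n ∈ dyadicBlock j, Fsq Y n ω = ‖g n ω‖ ^ 2 := by
    intro n hn
    have hne := dyadicBlock_ne_zero hn
    rw [Fsq, dif_neg hne, ← hXYω (⟨n, hne⟩, true), ← hXYω (⟨n, hne⟩, false)]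
    have h1 : X (⟨n, hne⟩, true) ω = (g n ω).re := by simp [hXdef]
    have h2 : X (⟨n, hne⟩, false) ω = (g n ω).im := by simp [hXdef]
    rw [h1, h2, Complex.sq_norm, Complex.normSq_apply]
    ring
  have hsum : ∑ n ∈ dyadicBlock j, Fsq Y n ω
      = ∑ n ∈ dyadicBlock j, ‖g n ω‖ ^ 2 := Finset.sum_congr rfl hFn
  have hsup : (⨆ n ∈ dyadicBlock j, Fsq Y n ω)
      = ⨆ n ∈ dyadicBlock j, ‖g n ω‖ ^ 2 :=
    iSup_congr fun n => iSup_congr fun hn => hFn n hn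
  rw [hsum, hsup]

end MainTheorem
end
end
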